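/- arXiv:2206.15018 — 10 statements merged into one kernel-verified Lean document; each statement's English description precedes it below -/
import Mathlib

section
/- Let M = [[A, B], [C, D]] be a partitioned real matrix. If the column space of B is contained in the column space of A and the column space of C^T is contained in the column space of A^T, then rank(M) = rank(A) + rank(D - C A⁺ B), where A⁺ is the Moore–Penrose pseudoinverse of A. -/
open Matrix

/-- `P` is the Moore–Penrose pseudoinverse of `A` (the four Penrose conditions). -/
def IsMPInv {m n : ℕ} (A : Matrix (Fin m) (Fin n) ℝ) (P : Matrix (Fin n) (Fin m) ℝ) : Prop :=
  A * P * A = A ∧ P * A * P = P ∧ (A * P)ᵀ = A * P ∧ (P * A)ᵀ = P * A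

section Aux

variable {K : Type*} [Field K]

/-- Range of a product map of linear maps. -/
lemma range_prodMap' {M M₂ M₃ M₄ : Type*} [AddCommGroup M] [AddCommGroup M₂]
    [AddCommGroup M₃] [AddCommGroup M₄] [Module K M] [Module K M₂] [Module K M₃] [Module K M₄]
    (f : M →ₗ[K] M₂) (g : M₃ →ₗ[K] M₄) :
    LinearMap.range (f.prodMap g) = (LinearMap.range f).prod (LinearMap.range g) := by
  ext ⟨y₁, y₂⟩
  simp only [LinearMap.mem_range, Submodule.mem_prod, LinearMap.prodMap_apply, Prod.mk.injEq,
    Prod.exists]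
  constructor
  · rintro ⟨a, b, h1, h2⟩; exact ⟨⟨a, h1⟩, ⟨b, h2⟩⟩
  · rintro ⟨⟨a, h1⟩, ⟨b, h2⟩⟩; exact ⟨a, b, h1, h2⟩

/-- A product of submodules is linearly equivalent to the product of the submodules. -/
def submoduleProdEquiv {M M₂ : Type*} [AddCommGroup M] [AddCommGroup M₂]
    [Module K M] [Module K M₂] (S : Submodule K M) (T : Submodule K M₂) :
    ↥(S.prod T) ≃ₗ[K] ↥S × ↥T where
  toFun x := (⟨x.1.1, x.2.1⟩, ⟨x.1.2, x.2.2⟩)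
  invFun y := ⟨(y.1.1, y.2.1), y.1.2, y.2.2⟩
  map_add' x y := rfl
  map_smul' c x := rfl
  left_inv x := rfl
  right_inv y := rfl

lemma finrank_prod_submodule {M M₂ : Type*} [AddCommGroup M] [AddCommGroup M₂]
    [Module K M] [Module K M₂] (S : Submodule K M) (T : Submodule K M₂)
    [Module.Finite K S] [Module.Finite K T] :
    Module.finrank K ↥(S.prod T) = Module.finrank K S + Module.finrank K T := by
  rw [LinearEquiv.finrank_eq (submoduleProdEquiv S T), Module.finrank_prod]

/-- The rank of a block diagonal matrix is the sum of the ranks of the blocks. -/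
lemma rank_fromBlocks_diag {m n m' n' : Type*} [Fintype m] [Fintype n] [Fintype m'] [Fintype n']
    (A : Matrix m n K) (S : Matrix m' n' K) :
    (fromBlocks A 0 0 S).rank = A.rank + S.rank := by
  let eIn := LinearEquiv.sumArrowLequivProdArrow n n' K K
  let eOut := LinearEquiv.sumArrowLequivProdArrow m m' K K
  have key : A.mulVecLin.prodMap S.mulVecLin =
      (eOut.toLinearMap.comp (fromBlocks A 0 0 S).mulVecLin).comp eIn.symm.toLinearMap := by
    refine LinearMap.ext fun v => ?_
    obtain ⟨x, x'⟩ := v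
    refine Prod.ext ?_ ?_ <;> funext i <;>
      simp [eIn, eOut, fromBlocks_mulVec, Function.comp_def]
  have hr : LinearMap.range (A.mulVecLin.prodMap S.mulVecLin) =
      Submodule.map eOut.toLinearMap (LinearMap.range (fromBlocks A 0 0 S).mulVecLin) := by
    rw [key, LinearMap.range_comp, LinearEquiv.range, Submodule.map_top, LinearMap.range_comp]
  rw [range_prodMap'] at hr
  have h1 : Module.finrank K ((LinearMap.range A.mulVecLin).prod (LinearMap.range S.mulVecLin)) =
      Module.finrank K (LinearMap.range (fromBlocks A 0 0 S).mulVecLin) := by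
    rw [hr]; exact (LinearEquiv.finrank_map_eq eOut _)
  rw [Matrix.rank, ← h1, finrank_prod_submodule]
  rfl

/-- Matrices are equal if they have equal `mulVec`. -/
lemma eq_of_mulVec_eq {m n : Type*} [Fintype n] [DecidableEq n] {M N : Matrix m n K}
    (h : ∀ v, M.mulVec v = N.mulVec v) : M = N :=
  Matrix.toLin'.injective (LinearMap.ext fun v => by
    simp only [Matrix.toLin'_apply, h v])

end Aux

/-- Rank additivity of the generalized Schur complement. -/
theorem schur_rank_additivity {p q s t : ℕ}
    (A : Matrix (Fin p) (Fin q) ℝ) (B : Matrix (Fin p) (Fin s) ℝ)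
    (C : Matrix (Fin t) (Fin q) ℝ) (D : Matrix (Fin t) (Fin s) ℝ)
    (Ap : Matrix (Fin q) (Fin p) ℝ) (hAp : IsMPInv A Ap)
    (hB : LinearMap.range B.mulVecLin ≤ LinearMap.range A.mulVecLin)
    (hC : LinearMap.range Cᵀ.mulVecLin ≤ LinearMap.range Aᵀ.mulVecLin) :
    (fromBlocks A B C D).rank = A.rank + (D - C * Ap * B).rank := by
  obtain ⟨h₁, -, -, -⟩ := hAp
  -- A * Ap * B = B
  have hABB : A * Ap * B = B := by
    apply eq_of_mulVec_eq
    intro v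
    obtain ⟨z, hz⟩ := hB ⟨v, rfl⟩
    simp only [mulVecLin_apply] at hz
    rw [← Matrix.mulVec_mulVec, ← Matrix.mulVec_mulVec, ← hz, Matrix.mulVec_mulVec,
      Matrix.mulVec_mulVec, h₁]
  -- C * Ap * A = C
  have hCAA : C * Ap * A = C := by
    have ht : Aᵀ * Apᵀ * Aᵀ = Aᵀ := by
      rw [Matrix.mul_assoc, ← Matrix.transpose_mul, ← Matrix.transpose_mul, h₁]
    have : Aᵀ * Apᵀ * Cᵀ = Cᵀ := by
      apply eq_of_mulVec_eq
      intro v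
      obtain ⟨z, hz⟩ := hC ⟨v, rfl⟩
      simp only [mulVecLin_apply] at hz
      rw [← Matrix.mulVec_mulVec, ← Matrix.mulVec_mulVec, ← hz, Matrix.mulVec_mulVec,
        Matrix.mulVec_mulVec, ht]
    calc C * Ap * A = (Aᵀ * Apᵀ * Cᵀ)ᵀ := by
            simp [Matrix.transpose_mul, Matrix.mul_assoc]
      _ = C := by rw [this, Matrix.transpose_transpose]
  set S := D - C * Ap * B with hS
  -- factorization
  have hfact : fromBlocks A B C D =
      (fromBlocks 1 0 (C * Ap) 1 : Matrix (Fin p ⊕ Fin t) (Fin p ⊕ Fin t) ℝ) *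
        ((fromBlocks A 0 0 S : Matrix (Fin p ⊕ Fin t) (Fin q ⊕ Fin s) ℝ) *
          (fromBlocks 1 (Ap * B) 0 1 : Matrix (Fin q ⊕ Fin s) (Fin q ⊕ Fin s) ℝ)) := by
    rw [Matrix.fromBlocks_multiply, Matrix.fromBlocks_multiply]
    congr 1 <;> simp [hS, Matrix.mul_assoc, hABB, hCAA, ← Matrix.mul_assoc]
  rw [hfact,
    Matrix.rank_mul_eq_right_of_isUnit_det _ _
      (by rw [Matrix.det_fromBlocks_zero₁₂]; simp),
    Matrix.rank_mul_eq_left_of_isUnit_det _ _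
      (by rw [Matrix.det_fromBlocks_zero₂₁]; simp),
    rank_fromBlocks_diag]
end

section
/- Let M = [[A, B], [C, D]] be a real matrix of rank r, where blocks A, B, C are fixed. If rank(A) = r, then the block D is uniquely determined: D = C A⁺ B. In particular, any matrix M' = [[A, B], [C, D']] with rank(M') ≤ r satisfies D' = C A⁺ B. -/
open Matrix

private lemma colAbs {p q s : ℕ} (A : Matrix (Fin p) (Fin q) ℝ) (Ap : Matrix (Fin q) (Fin p) ℝ)
    (B : Matrix (Fin p) (Fin s) ℝ) (h1 : A * Ap * A = A)
    (h : (fromCols A B).rank ≤ A.rank) : A * Ap * B = B := by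
  have hle : Submodule.span ℝ (Set.range Aᵀ) ≤
      Submodule.span ℝ (Set.range (fromCols A B)ᵀ) := by
    apply Submodule.span_mono
    rintro _ ⟨j, rfl⟩
    exact ⟨Sum.inl j, by ext i; simp⟩
  have heq : Submodule.span ℝ (Set.range Aᵀ) =
      Submodule.span ℝ (Set.range (fromCols A B)ᵀ) := by
    apply Submodule.eq_of_le_of_finrank_le hle
    exact (rank_eq_finrank_span_cols (fromCols A B)).symm.le.trans
      (h.trans (rank_eq_finrank_span_cols A).le)
  have hmem : ∀ j, (fun i => B i j) ∈ LinearMap.range A.mulVecLin := by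
    intro j
    rw [Matrix.range_mulVecLin, Matrix.col, heq]
    apply Submodule.subset_span
    exact ⟨Sum.inr j, by ext i; simp⟩
  ext i j
  obtain ⟨x, hx⟩ := hmem j
  have hx' : A.mulVec x = fun i => B i j := hx
  have hcol : (fun i => (A * Ap * B) i j) = (A * Ap).mulVec (fun k => B k j) := by
    funext i
    simp [Matrix.mul_apply, Matrix.mulVec, dotProduct, Finset.mul_sum, Finset.sum_mul]
  have : (fun i => (A * Ap * B) i j) = fun i => B i j := by
    rw [hcol, ← hx', mulVec_mulVec, h1]
  exact congrFun this i

private lemma diagZero {p q t s : ℕ} (A : Matrix (Fin p) (Fin q) ℝ)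
    (E : Matrix (Fin t) (Fin s) ℝ)
    (h : (fromBlocks A 0 0 E).rank ≤ A.rank) : E = 0 := by
  set N := fromBlocks A (0 : Matrix (Fin p) (Fin s) ℝ) (0 : Matrix (Fin t) (Fin q) ℝ) E with hN
  have hA1 : A.rank ≤ (fromRows A (0 : Matrix (Fin t) (Fin q) ℝ)).rank := by
    have hfac : A = fromCols (1 : Matrix (Fin p) (Fin p) ℝ) (0 : Matrix (Fin p) (Fin t) ℝ) *
        fromRows A (0 : Matrix (Fin t) (Fin q) ℝ) := by
      simp [fromCols_mul_fromRows]
    have h2 := rank_mul_le_right (fromCols (1 : Matrix (Fin p) (Fin p) ℝ)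
      (0 : Matrix (Fin p) (Fin t) ℝ)) (fromRows A (0 : Matrix (Fin t) (Fin q) ℝ))
    rw [← hfac] at h2
    exact h2
  have hle : Submodule.span ℝ (Set.range (fromRows A (0 : Matrix (Fin t) (Fin q) ℝ))ᵀ) ≤
      Submodule.span ℝ (Set.range Nᵀ) := by
    apply Submodule.span_mono
    rintro _ ⟨j, rfl⟩
    refine ⟨Sum.inl j, ?_⟩
    ext i
    cases i <;> simp [hN, fromBlocks]
  have heq : Submodule.span ℝ (Set.range (fromRows A (0 : Matrix (Fin t) (Fin q) ℝ))ᵀ) =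
      Submodule.span ℝ (Set.range Nᵀ) := by
    apply Submodule.eq_of_le_of_finrank_le hle
    exact (rank_eq_finrank_span_cols N).symm.le.trans ((le_trans h hA1).trans
      (rank_eq_finrank_span_cols (fromRows A (0 : Matrix (Fin t) (Fin q) ℝ))).le)
  set π : ((Fin p ⊕ Fin t) → ℝ) →ₗ[ℝ] (Fin t → ℝ) := LinearMap.funLeft ℝ ℝ Sum.inr with hπ
  have hker : Submodule.span ℝ (Set.range (fromRows A (0 : Matrix (Fin t) (Fin q) ℝ))ᵀ) ≤
      LinearMap.ker π := by
    rw [Submodule.span_le]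
    rintro _ ⟨j, rfl⟩
    simp only [SetLike.mem_coe, LinearMap.mem_ker]
    ext i
    simp [hπ, LinearMap.funLeft]
  ext i j
  have hmem : (fun i => N i (Sum.inr j)) ∈ Submodule.span ℝ (Set.range Nᵀ) :=
    Submodule.subset_span ⟨Sum.inr j, rfl⟩
  rw [← heq] at hmem
  have := hker hmem
  rw [LinearMap.mem_ker] at this
  have h0 : π (fun i => N i (Sum.inr j)) i = 0 := by rw [this]; rfl
  simpa [hπ, LinearMap.funLeft, hN, fromBlocks] using h0

/-- If `rank A = r = rank [[A,B],[C,D]]`, then `D = C A⁺ B` is uniquely determined. -/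
theorem unique_completion_of_rank_eq {p q s t r : ℕ}
    (A : Matrix (Fin p) (Fin q) ℝ) (B : Matrix (Fin p) (Fin s) ℝ)
    (C : Matrix (Fin t) (Fin q) ℝ) (D : Matrix (Fin t) (Fin s) ℝ)
    (Ap : Matrix (Fin q) (Fin p) ℝ) (hAp : IsMPInv A Ap)
    (hM : (fromBlocks A B C D).rank = r) (hA : A.rank = r) :
    D = C * Ap * B ∧
      ∀ D' : Matrix (Fin t) (Fin s) ℝ, (fromBlocks A B C D').rank ≤ r → D' = C * Ap * B := by
  obtain ⟨h1, h2, h3, h4⟩ := hAp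
  have main : ∀ D' : Matrix (Fin t) (Fin s) ℝ,
      (fromBlocks A B C D').rank ≤ r → D' = C * Ap * B := by
    intro D' hle
    -- rank of the top row block
    have hABfac : fromCols A B =
        fromCols (1 : Matrix (Fin p) (Fin p) ℝ) (0 : Matrix (Fin p) (Fin t) ℝ) *
          fromBlocks A B C D' := by
      ext i j
      cases j <;>
        simp [Matrix.mul_apply, Fintype.sum_sum_type, fromBlocks, one_apply]
    have hAB : (fromCols A B).rank ≤ A.rank := by
      rw [hABfac, hA]
      exact le_trans (rank_mul_le_right _ _) hle
    -- rank of the left column block (via transpose)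
    have hACfac : fromCols Aᵀ Cᵀ =
        fromCols (1 : Matrix (Fin q) (Fin q) ℝ) (0 : Matrix (Fin q) (Fin s) ℝ) *
          (fromBlocks A B C D')ᵀ := by
      ext i j
      cases j <;>
        simp [Matrix.mul_apply, Fintype.sum_sum_type, fromBlocks, one_apply]
    have hAC : (fromCols Aᵀ Cᵀ).rank ≤ Aᵀ.rank := by
      rw [hACfac, rank_transpose, hA]
      exact le_trans (rank_mul_le_right _ _) (le_trans (rank_transpose _).le hle)
    have h1T : Aᵀ * Apᵀ * Aᵀ = Aᵀ := by
      have h := congrArg Matrix.transpose h1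
      simp only [transpose_mul] at h
      rw [Matrix.mul_assoc]
      exact h
    have hB : A * Ap * B = B := colAbs A Ap B h1 hAB
    have hCT : Aᵀ * Apᵀ * Cᵀ = Cᵀ := colAbs Aᵀ Apᵀ Cᵀ h1T hAC
    have hC : C * Ap * A = C := by
      have h := congrArg Matrix.transpose hCT
      simp only [transpose_mul, transpose_transpose] at h
      rw [Matrix.mul_assoc]
      exact h
    -- block elimination
    have key : fromBlocks (1 : Matrix (Fin p) (Fin p) ℝ) 0 (-(C * Ap)) (1 : Matrix (Fin t) (Fin t) ℝ) *
        fromBlocks A B C D' *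
        fromBlocks (1 : Matrix (Fin q) (Fin q) ℝ) (-(Ap * B)) (0 : Matrix (Fin s) (Fin q) ℝ) (1 : Matrix (Fin s) (Fin s) ℝ) =
        fromBlocks A 0 0 (D' - C * Ap * B) := by
      have hBr : A * (Ap * B) = B := by rw [← Matrix.mul_assoc]; exact hB
      have hCr : C * (Ap * A) = C := by rw [← Matrix.mul_assoc]; exact hC
      simp [fromBlocks_multiply, hBr, hCr, Matrix.mul_assoc, sub_eq_add_neg, add_mul, mul_add,
        add_comm]
    have hrank : (fromBlocks A (0 : Matrix (Fin p) (Fin s) ℝ)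
        (0 : Matrix (Fin t) (Fin q) ℝ) (D' - C * Ap * B)).rank ≤ A.rank := by
      rw [← key, hA]
      exact le_trans (rank_mul_le_left _ _)
        (le_trans (rank_mul_le_right _ _) hle)
    have := diagZero A (D' - C * Ap * B) hrank
    exact sub_eq_zero.mp this
  exact ⟨main D hM.le, main⟩
end

section
/- Let M = [[A, B], [C, D]] be a real matrix of rank r with rank(A) < r, Range(B) ⊆ Range(A), and Range(Cᵀ) ⊆ Range(Aᵀ). Then there exists D' ≠ D such that the matrix [[A, B], [C, D']] also has rank r. (In fact, D' = CA⁺B + E works for any E of rank r - rank(A).) -/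
open Matrix

-- existence of a solution to A * X = B from range inclusion
lemma exists_factor {p q s : ℕ} {A : Matrix (Fin p) (Fin q) ℝ} {B : Matrix (Fin p) (Fin s) ℝ}
    (h : LinearMap.range B.mulVecLin ≤ LinearMap.range A.mulVecLin) :
    ∃ X : Matrix (Fin q) (Fin s) ℝ, A * X = B := by
  have hc : ∀ j : Fin s, ∃ x : Fin q → ℝ, A.mulVec x = fun i => B i j := by
    intro j
    have hmem : (fun i => B i j) ∈ LinearMap.range A.mulVecLin := by
      apply h
      exact ⟨Pi.single j 1, by ext i; simp [Matrix.mulVecLin_apply]⟩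
    obtain ⟨x, hx⟩ := hmem
    exact ⟨x, hx⟩
  choose x hx using hc
  refine ⟨Matrix.of fun i j => x j i, ?_⟩
  ext i j
  have := congrFun (hx j) i
  simpa [Matrix.mul_apply, Matrix.mulVec, dotProduct, Matrix.transpose_apply] using this

-- finrank of a product of submodules
lemma finrank_submodule_prod {M N : Type*} [AddCommGroup M] [AddCommGroup N]
    [Module ℝ M] [Module ℝ N] [FiniteDimensional ℝ M] [FiniteDimensional ℝ N]
    (P : Submodule ℝ M) (Q : Submodule ℝ N) :
    Module.finrank ℝ (P.prod Q) = Module.finrank ℝ P + Module.finrank ℝ Q := by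
  have e : (P.prod Q) ≃ₗ[ℝ] P × Q :=
    { toFun := fun x => (⟨x.1.1, x.2.1⟩, ⟨x.1.2, x.2.2⟩)
      invFun := fun y => ⟨(y.1.1, y.2.1), ⟨y.1.2, y.2.2⟩⟩
      map_add' := fun a b => rfl
      map_smul' := fun c a => rfl
      left_inv := fun a => rfl
      right_inv := fun a => rfl }
  rw [e.finrank_eq, Module.finrank_prod]

-- rank of a block diagonal matrix
lemma rank_fromBlocks_diag_s3 {p q s t : ℕ} (A : Matrix (Fin p) (Fin q) ℝ)
    (S : Matrix (Fin t) (Fin s) ℝ) :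
    (fromBlocks A 0 0 S).rank = A.rank + S.rank := by
  classical
  let e : ((Fin p ⊕ Fin t) → ℝ) ≃ₗ[ℝ] (Fin p → ℝ) × (Fin t → ℝ) :=
    LinearEquiv.sumArrowLequivProdArrow (Fin p) (Fin t) ℝ ℝ
  have hmap : Submodule.map (e : ((Fin p ⊕ Fin t) → ℝ) →ₗ[ℝ] _)
      (LinearMap.range (fromBlocks A 0 0 S).mulVecLin)
      = (LinearMap.range A.mulVecLin).prod (LinearMap.range S.mulVecLin) := by
    ext ⟨u, w⟩
    simp only [Submodule.mem_map, LinearMap.mem_range, Submodule.mem_prod]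
    constructor
    · rintro ⟨v, ⟨x, rfl⟩, hv⟩
      have hv1 : (e ((fromBlocks A 0 0 S).mulVecLin x)).1 = u := congrArg Prod.fst hv
      have hv2 : (e ((fromBlocks A 0 0 S).mulVecLin x)).2 = w := congrArg Prod.snd hv
      refine ⟨⟨x ∘ Sum.inl, ?_⟩, ⟨x ∘ Sum.inr, ?_⟩⟩
      · rw [← hv1]
        ext i
        simp [e, Matrix.mulVecLin_apply, Matrix.fromBlocks_mulVec, Matrix.zero_mulVec]
      · rw [← hv2]
        ext i
        simp [e, Matrix.mulVecLin_apply, Matrix.fromBlocks_mulVec, Matrix.zero_mulVec]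
    · rintro ⟨⟨x₁, hx₁⟩, ⟨x₂, hx₂⟩⟩
      refine ⟨Sum.elim u w, ⟨Sum.elim x₁ x₂, ?_⟩, ?_⟩
      · ext (i | i) <;>
          simp [Matrix.mulVecLin_apply, Matrix.fromBlocks_mulVec, Matrix.zero_mulVec,
            ← hx₁, ← hx₂]
      · ext i <;> simp [e]
  rw [Matrix.rank, ← LinearEquiv.finrank_map_eq e, hmap, finrank_submodule_prod]
  rfl

lemma rank_fromBlocks_of_factors {p q s t : ℕ} (A : Matrix (Fin p) (Fin q) ℝ)
    (B : Matrix (Fin p) (Fin s) ℝ) (C : Matrix (Fin t) (Fin q) ℝ) (D : Matrix (Fin t) (Fin s) ℝ)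
    (X : Matrix (Fin q) (Fin s) ℝ) (W : Matrix (Fin t) (Fin p) ℝ)
    (hX : A * X = B) (hW : W * A = C) :
    (fromBlocks A B C D).rank = A.rank + (D - C * X).rank := by
  classical
  have hfac : Matrix.fromBlocks A B C D =
      Matrix.fromBlocks (1 : Matrix (Fin p) (Fin p) ℝ) 0 W (1 : Matrix (Fin t) (Fin t) ℝ) *
        Matrix.fromBlocks A 0 0 (D - C * X) *
        Matrix.fromBlocks (1 : Matrix (Fin q) (Fin q) ℝ) X 0 (1 : Matrix (Fin s) (Fin s) ℝ) := by
    have hD : C * X + (D - C * X) = D := by abel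
    rw [fromBlocks_multiply, fromBlocks_multiply]
    simp only [Matrix.one_mul, Matrix.mul_one, Matrix.zero_mul, Matrix.mul_zero,
      add_zero, zero_add, hX, hW, hD]
  have hL : IsUnit (fromBlocks (1 : Matrix (Fin p) (Fin p) ℝ) 0 W 1).det := by
    rw [det_fromBlocks_zero₁₂]
    simp
  have hU : IsUnit (fromBlocks (1 : Matrix (Fin q) (Fin q) ℝ) X 0 1).det := by
    rw [det_fromBlocks_zero₂₁]
    simp
  rw [hfac, rank_mul_eq_left_of_isUnit_det _ _ hU, rank_mul_eq_right_of_isUnit_det _ _ hL,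
    rank_fromBlocks_diag_s3]


/-- If `rank A < r` and the range inclusions hold, the completion is not unique. -/
theorem nonunique_completion_of_rank_lt {p q s t r : ℕ}
    (A : Matrix (Fin p) (Fin q) ℝ) (B : Matrix (Fin p) (Fin s) ℝ)
    (C : Matrix (Fin t) (Fin q) ℝ) (D : Matrix (Fin t) (Fin s) ℝ)
    (hM : (fromBlocks A B C D).rank = r) (hA : A.rank < r)
    (hB : LinearMap.range B.mulVecLin ≤ LinearMap.range A.mulVecLin)
    (hC : LinearMap.range Cᵀ.mulVecLin ≤ LinearMap.range Aᵀ.mulVecLin) :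
    ∃ D' : Matrix (Fin t) (Fin s) ℝ, D' ≠ D ∧ (fromBlocks A B C D').rank = r := by

  obtain ⟨X, hX⟩ := exists_factor hB
  obtain ⟨Y, hY⟩ := exists_factor hC
  have hW : Yᵀ * A = C := by
    have := congrArg Matrix.transpose hY
    simpa [Matrix.transpose_mul] using this
  set S := D - C * X with hS
  have hr : A.rank + S.rank = r := by
    rw [← rank_fromBlocks_of_factors A B C D X Yᵀ hX hW, hM]
  have hSne : S ≠ 0 := by
    intro h0
    rw [h0, Matrix.rank_zero, add_zero] at hr
    omega
  refine ⟨D + S, ?_, ?_⟩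
  · intro h
    exact hSne (by simpa using congrArg (fun M => M - D) h)
  · have h2 := rank_fromBlocks_of_factors A B C (D + S) X Yᵀ hX hW
    have hDS : (D + S) - C * X = ((2 : ℝ) • (1 : Matrix (Fin t) (Fin t) ℝ)) * S := by
      rw [Matrix.smul_mul, Matrix.one_mul, two_smul, hS]
      abel
    have hdet : IsUnit ((2 : ℝ) • (1 : Matrix (Fin t) (Fin t) ℝ)).det := by
      rw [Matrix.det_smul, Matrix.det_one, mul_one]
      exact (isUnit_iff_ne_zero.mpr (by positivity))
    rw [h2, hDS, rank_mul_eq_right_of_isUnit_det _ _ hdet, hr]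
end

section
/- Let M = [[A, B], [C, D]] be a real matrix of rank r with blocks A, B, C fixed. Then D is uniquely determined (i.e., every matrix [[A, B], [C, D']] of rank at most r satisfies D' = D) if and only if rank(A) = r. -/
open Matrix Module

section Helpers

variable {p q s t : ℕ}

private lemma rank_left_le_fromCols (A : Matrix (Fin p) (Fin q) ℝ)
    (B : Matrix (Fin p) (Fin s) ℝ) : A.rank ≤ (fromCols A B).rank := by
  have h : fromCols A B * fromRows (1 : Matrix (Fin q) (Fin q) ℝ)
      (0 : Matrix (Fin s) (Fin q) ℝ) = A := by
    rw [fromCols_mul_fromRows]; simp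
  calc A.rank = (fromCols A B * (fromRows 1 0 : Matrix (Fin q ⊕ Fin s) (Fin q) ℝ)).rank := by rw [h]
    _ ≤ (fromCols A B).rank := rank_mul_le_left _ _

private lemma rank_fromCols_le_fromBlocks (A : Matrix (Fin p) (Fin q) ℝ)
    (B : Matrix (Fin p) (Fin s) ℝ) (C : Matrix (Fin t) (Fin q) ℝ)
    (D : Matrix (Fin t) (Fin s) ℝ) :
    (fromCols A B).rank ≤ (fromBlocks A B C D).rank := by
  have h : fromCols (1 : Matrix (Fin p) (Fin p) ℝ) (0 : Matrix (Fin p) (Fin t) ℝ)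
      * fromBlocks A B C D = fromCols A B := by
    rw [← fromRows_fromCols_eq_fromBlocks, fromCols_mul_fromRows]; simp
  calc (fromCols A B).rank = _ := by rw [← h]
    _ ≤ (fromBlocks A B C D).rank := rank_mul_le_right _ _

private lemma exists_mul_eq_of_rank_le (A : Matrix (Fin p) (Fin q) ℝ)
    (B : Matrix (Fin p) (Fin s) ℝ) (h : (fromCols A B).rank ≤ A.rank) :
    ∃ X : Matrix (Fin q) (Fin s) ℝ, A * X = B := by
  have hle : LinearMap.range A.mulVecLin ≤ LinearMap.range (fromCols A B).mulVecLin := by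
    rintro x ⟨v, rfl⟩
    exact ⟨Sum.elim v 0, by simp [mulVecLin_apply]⟩
  have h' : finrank ℝ (LinearMap.range (fromCols A B).mulVecLin) ≤
      finrank ℝ (LinearMap.range A.mulVecLin) := h
  have heq : LinearMap.range A.mulVecLin = LinearMap.range (fromCols A B).mulVecLin :=
    Submodule.eq_of_le_of_finrank_le hle h'
  have hcol : ∀ j, ∃ x, A *ᵥ x = B *ᵥ Pi.single j 1 := by
    intro j
    have hm : B *ᵥ Pi.single j 1 ∈ LinearMap.range (fromCols A B).mulVecLin :=
      ⟨Sum.elim 0 (Pi.single j 1), by simp [mulVecLin_apply]; ext; simp⟩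
    rw [← heq] at hm
    obtain ⟨x, hx⟩ := hm
    exact ⟨x, hx⟩
  choose x hx using hcol
  refine ⟨Matrix.of fun i j => x j i, ?_⟩
  ext i j
  have h1 := congrFun (hx j) i
  rw [mulVec_single_one] at h1
  simpa [Matrix.mul_apply, Matrix.mulVec, dotProduct] using h1

private lemma rank_fromRows_eq (A : Matrix (Fin p) (Fin q) ℝ) (C : Matrix (Fin t) (Fin q) ℝ)
    (h : ∀ v, A *ᵥ v = 0 → C *ᵥ v = 0) : (fromRows A C).rank = A.rank := by
  have hker : LinearMap.ker (fromRows A C).mulVecLin = LinearMap.ker A.mulVecLin := by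
    ext v
    simp only [LinearMap.mem_ker, mulVecLin_apply, fromRows_mulVec]
    constructor
    · intro hv
      funext i
      simpa using congrFun hv (Sum.inl i)
    · intro hv
      funext i
      cases i with
      | inl i => simpa using congrFun hv i
      | inr i => simpa using congrFun (h v hv) i
  have h1 := (fromRows A C).mulVecLin.finrank_range_add_finrank_ker
  have h2 := A.mulVecLin.finrank_range_add_finrank_ker
  rw [hker] at h1
  show finrank ℝ (LinearMap.range (fromRows A C).mulVecLin) =
    finrank ℝ (LinearMap.range A.mulVecLin)
  omega

private lemma mul_vecMulVec' {m n k : Type*} [Fintype n] (M : Matrix m n ℝ) (c : n → ℝ)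
    (v : k → ℝ) : M * vecMulVec c v = vecMulVec (M *ᵥ c) v := by
  ext i j
  simp [Matrix.mul_apply, vecMulVec_apply, Matrix.mulVec, dotProduct, Finset.sum_mul, mul_assoc]

private lemma vecMulVec_mul' {m n k : Type*} [Fintype n] (c : m → ℝ) (v : n → ℝ)
    (M : Matrix n k ℝ) : vecMulVec c v * M = vecMulVec c (v ᵥ* M) := by
  ext i j
  simp [Matrix.mul_apply, vecMulVec_apply, Matrix.vecMul, dotProduct, Finset.mul_sum, mul_assoc]

private lemma vecMulVec_elim_zero {m₁ m₂ n₁ n₂ : Type*} (w : m₂ → ℝ) (v : n₂ → ℝ) :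
    vecMulVec (Sum.elim (0 : m₁ → ℝ) w) (Sum.elim (0 : n₁ → ℝ) v) =
      fromBlocks 0 0 0 (vecMulVec w v) := by
  ext (i | i) (j | j) <;> simp [vecMulVec_apply]

/-- If `rank [A B] = r`, `A * X = B` and `rank [[A,B],[C,E]] ≤ r` then `E = C * X`. -/
private lemma completion_eq {r : ℕ} (A : Matrix (Fin p) (Fin q) ℝ)
    (B : Matrix (Fin p) (Fin s) ℝ) (C : Matrix (Fin t) (Fin q) ℝ)
    (E : Matrix (Fin t) (Fin s) ℝ) (X : Matrix (Fin q) (Fin s) ℝ)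
    (hAB : (fromCols A B).rank = r) (hX : A * X = B)
    (hE : (fromBlocks A B C E).rank ≤ r) : E = C * X := by
  have hNT : (fromBlocks Aᵀ Cᵀ Bᵀ Eᵀ).rank ≤ r := by
    rw [← fromBlocks_transpose, rank_transpose]; exact hE
  have hG : (fromRows Aᵀ Bᵀ).rank = r := by
    rw [← transpose_fromCols, rank_transpose]; exact hAB
  have hle : LinearMap.range (fromRows Aᵀ Bᵀ).mulVecLin ≤
      LinearMap.range (fromBlocks Aᵀ Cᵀ Bᵀ Eᵀ).mulVecLin := by
    rintro x ⟨v, rfl⟩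
    refine ⟨Sum.elim v 0, ?_⟩
    simp [mulVecLin_apply, fromBlocks_mulVec]
  have h' : finrank ℝ (LinearMap.range (fromBlocks Aᵀ Cᵀ Bᵀ Eᵀ).mulVecLin) ≤
      finrank ℝ (LinearMap.range (fromRows Aᵀ Bᵀ).mulVecLin) := le_trans hNT hG.ge
  have heq := Submodule.eq_of_le_of_finrank_le hle h'
  have key : ∀ i : Fin t, Eᵀ *ᵥ Pi.single i 1 = (C * X)ᵀ *ᵥ Pi.single i 1 := by
    intro i
    have hmem : Sum.elim (Cᵀ *ᵥ Pi.single i 1) (Eᵀ *ᵥ Pi.single i 1) ∈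
        LinearMap.range (fromRows Aᵀ Bᵀ).mulVecLin := by
      rw [heq]
      refine ⟨Sum.elim 0 (Pi.single i 1), ?_⟩
      rw [mulVecLin_apply, fromBlocks_mulVec]
      simp only [Sum.elim_comp_inl, Sum.elim_comp_inr]
      simp
    obtain ⟨z, hz⟩ := hmem
    rw [mulVecLin_apply, fromRows_mulVec] at hz
    have hz1 : Aᵀ *ᵥ z = Cᵀ *ᵥ Pi.single i 1 := by
      funext j; exact congrFun hz (Sum.inl j)
    have hz2 : Bᵀ *ᵥ z = Eᵀ *ᵥ Pi.single i 1 := by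
      funext j; exact congrFun hz (Sum.inr j)
    calc Eᵀ *ᵥ Pi.single i 1 = Bᵀ *ᵥ z := hz2.symm
      _ = (A * X)ᵀ *ᵥ z := by rw [hX]
      _ = Xᵀ *ᵥ (Aᵀ *ᵥ z) := by rw [transpose_mul, ← mulVec_mulVec]
      _ = Xᵀ *ᵥ (Cᵀ *ᵥ Pi.single i 1) := by rw [hz1]
      _ = (C * X)ᵀ *ᵥ Pi.single i 1 := by rw [transpose_mul, ← mulVec_mulVec]
  ext i j
  have hij := congrFun (key i) j
  simpa only [mulVec_single_one, col_apply, mul_one, transpose_apply] using hij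

end Helpers

/-- `D` is uniquely determined by `A, B, C` and the rank constraint iff `rank A = r`. -/
theorem unique_completion_iff_rank_eq {p q s t r : ℕ}
    (hp : 0 < p) (hq : 0 < q) (hs : 0 < s) (ht : 0 < t) (hr : 1 ≤ r)
    (A : Matrix (Fin p) (Fin q) ℝ) (B : Matrix (Fin p) (Fin s) ℝ)
    (C : Matrix (Fin t) (Fin q) ℝ) (D : Matrix (Fin t) (Fin s) ℝ)
    (hM : (fromBlocks A B C D).rank = r) :
    (∀ D' : Matrix (Fin t) (Fin s) ℝ, (fromBlocks A B C D').rank ≤ r → D' = D) ↔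
      A.rank = r := by
  constructor
  · intro huniq
    by_contra hne
    have hABle : (fromCols A B).rank ≤ r :=
      le_of_le_of_eq (rank_fromCols_le_fromBlocks A B C D) hM
    have hAle : A.rank ≤ r := le_trans (rank_left_le_fromCols A B) hABle
    have hAlt : A.rank < r := lt_of_le_of_ne hAle hne
    by_cases h1 : ∃ z, A *ᵥ z = 0 ∧ C *ᵥ z ≠ 0
    · -- perturb D using a column relation
      obtain ⟨z, hz, hcz⟩ := h1
      set v : Fin s → ℝ := fun _ => 1 with hv
      have key : fromBlocks A B C (D + vecMulVec (C *ᵥ z) v) =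
          fromBlocks A B C D *
            (1 + vecMulVec (Sum.elim z (0 : Fin s → ℝ)) (Sum.elim (0 : Fin q → ℝ) v)) := by
        rw [Matrix.mul_add, Matrix.mul_one, mul_vecMulVec']
        have hm : fromBlocks A B C D *ᵥ Sum.elim z (0 : Fin s → ℝ) =
            Sum.elim (0 : Fin p → ℝ) (C *ᵥ z) := by
          rw [fromBlocks_mulVec]
          funext i
          cases i <;> simp [hz]
        rw [hm, vecMulVec_elim_zero, fromBlocks_add]
        simp
      have hrk : (fromBlocks A B C (D + vecMulVec (C *ᵥ z) v)).rank ≤ r := by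
        rw [key, ← hM]
        exact rank_mul_le_left _ _
      have hD := huniq _ hrk
      obtain ⟨i, hi⟩ : ∃ i, (C *ᵥ z) i ≠ 0 := by
        by_contra hc; push_neg at hc; exact hcz (funext hc)
      have hcontra : (D + vecMulVec (C *ᵥ z) v) i ⟨0, hs⟩ = D i ⟨0, hs⟩ := by rw [hD]
      simp [vecMulVec_apply, hv] at hcontra
      exact hi hcontra
    by_cases h2 : ∃ u, u ᵥ* A = 0 ∧ u ᵥ* B ≠ 0
    · -- perturb D using a row relation
      obtain ⟨u, hu, hbu⟩ := h2
      set w : Fin t → ℝ := fun _ => 1 with hw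
      have key : fromBlocks A B C (D + vecMulVec w (u ᵥ* B)) =
          (1 + vecMulVec (Sum.elim (0 : Fin p → ℝ) w) (Sum.elim u (0 : Fin t → ℝ))) *
            fromBlocks A B C D := by
        rw [Matrix.add_mul, Matrix.one_mul, vecMulVec_mul']
        have hm : Sum.elim u (0 : Fin t → ℝ) ᵥ* fromBlocks A B C D =
            Sum.elim (0 : Fin q → ℝ) (u ᵥ* B) := by
          rw [vecMul_fromBlocks]
          funext j
          cases j <;> simp [hu]
        rw [hm, vecMulVec_elim_zero, fromBlocks_add]
        simp
      have hrk : (fromBlocks A B C (D + vecMulVec w (u ᵥ* B))).rank ≤ r := by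
        rw [key, ← hM]
        exact rank_mul_le_right _ _
      have hD := huniq _ hrk
      obtain ⟨j, hj⟩ : ∃ j, (u ᵥ* B) j ≠ 0 := by
        by_contra hc; push_neg at hc; exact hbu (funext hc)
      have hcontra : (D + vecMulVec w (u ᵥ* B)) ⟨0, ht⟩ j = D ⟨0, ht⟩ j := by rw [hD]
      simp [vecMulVec_apply, hw] at hcontra
      exact hj hcontra
    · -- both kernels are degenerate: scale the Schur-type complement
      push_neg at h1 h2
      have hABeq : (fromCols A B).rank = A.rank := by
        have hT : (fromRows Aᵀ Bᵀ).rank = Aᵀ.rank := by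
          refine rank_fromRows_eq Aᵀ Bᵀ (fun u hu => ?_)
          rw [mulVec_transpose] at hu ⊢
          exact h2 u hu
        rw [← rank_transpose (fromCols A B), transpose_fromCols, hT, rank_transpose]
      obtain ⟨X, hX⟩ := exists_mul_eq_of_rank_le A B hABeq.le
      have hAC : (fromRows A C).rank = A.rank := rank_fromRows_eq A C h1
      have key : fromBlocks A B C (D + D - C * X) =
          fromBlocks A B C D *
            (fromBlocks 1 (-X) 0 (1 + 1) : Matrix (Fin q ⊕ Fin s) (Fin q ⊕ Fin s) ℝ) := by
        rw [fromBlocks_multiply]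
        rw [fromBlocks_inj]
        refine ⟨by simp, ?_, by simp, ?_⟩
        · rw [Matrix.mul_neg, hX, Matrix.mul_add, Matrix.mul_one]
          abel
        · rw [Matrix.mul_neg, Matrix.mul_add, Matrix.mul_one]
          abel
      have hrk : (fromBlocks A B C (D + D - C * X)).rank ≤ r := by
        rw [key, ← hM]
        exact rank_mul_le_left _ _
      have hD := huniq _ hrk
      have h3 : D + D = D + C * X := by rwa [sub_eq_iff_eq_add] at hD
      have hDCX : D = C * X := add_left_cancel h3
      have hfact : fromBlocks A B C D = fromRows A C * fromCols 1 X := by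
        rw [fromRows_mul_fromCols, Matrix.mul_one, Matrix.mul_one, hX, ← hDCX]
      have : r ≤ A.rank := by
        calc r = (fromBlocks A B C D).rank := hM.symm
          _ = (fromRows A C * fromCols 1 X).rank := by rw [hfact]
          _ ≤ (fromRows A C).rank := rank_mul_le_left _ _
          _ = A.rank := hAC
      omega
  · intro hAr D' hD'
    have hAB : (fromCols A B).rank = r :=
      le_antisymm (le_of_le_of_eq (rank_fromCols_le_fromBlocks A B C D) hM)
        (hAr ▸ rank_left_le_fromCols A B)
    obtain ⟨X, hX⟩ := exists_mul_eq_of_rank_le A B (hAB.trans hAr.symm).le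
    have e1 : D' = C * X := completion_eq A B C D' X hAB hX hD'
    have e2 : D = C * X := completion_eq A B C D X hAB hX hM.le
    rw [e1, e2]
end

section
/- Let Z be a real matrix of rank r partitioned into a 3×3 block pattern [[Z₁, X₁, X₂], [Y₁, Q, X₃], [Y₂, Y₃, Z₂]] where all blocks except Z₁ and Z₂ are fixed. If rank(Q) = r, then Z₁ and Z₂ are uniquely determined: any matrix with the same fixed blocks and rank at most r agrees with Z everywhere. -/
open Matrix

lemma range_submatrix_id_le {ι κ κ' : Type*} [Fintype ι] [Fintype κ] [Fintype κ']
    [DecidableEq κ] (N : Matrix ι κ ℝ) (g : κ' → κ) :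
    LinearMap.range (N.submatrix id g).mulVecLin ≤ LinearMap.range N.mulVecLin := by
  rintro _ ⟨x, rfl⟩
  refine ⟨∑ j', x j' • (Pi.single (g j') 1 : κ → ℝ), ?_⟩
  simp only [map_sum, _root_.map_smul, mulVecLin_apply, Matrix.mulVec_single]
  funext i
  simp [Matrix.mulVec, dotProduct, mul_comm]

lemma cross_unique {ι ι' κ κ' : Type*} [Fintype ι] [Fintype ι'] [Fintype κ] [Fintype κ']
    [DecidableEq κ] [DecidableEq κ'] {r : ℕ}
    (M M' : Matrix ι κ ℝ) (f : ι' → ι) (g : κ' → κ)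
    (hM : M.rank ≤ r) (hM' : M'.rank ≤ r)
    (hrow : ∀ i j, M (f i) j = M' (f i) j)
    (hcol : ∀ i j, M i (g j) = M' i (g j))
    (hQ : (M.submatrix f g).rank = r) : M = M' := by
  classical
  set C : Matrix ι κ' ℝ := M.submatrix id g with hC
  have hC' : M'.submatrix id g = C := by
    ext i j; exact (hcol i j).symm
  set π : (ι → ℝ) →ₗ[ℝ] (ι' → ℝ) := LinearMap.funLeft ℝ ℝ f with hπ
  set S : Submodule ℝ (ι → ℝ) := LinearMap.range C.mulVecLin with hS
  have hQcomp : (M.submatrix f g).mulVecLin = π ∘ₗ C.mulVecLin := by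
    ext x; rfl
  have hQmap : (M.submatrix f g).rank = Module.finrank ℝ (S.map π) := by
    rw [Matrix.rank, hQcomp, LinearMap.range_comp]
  have hrC : r ≤ C.rank := by
    rw [← hQ, hQmap]
    exact Submodule.finrank_map_le π S
  have hSM : S = LinearMap.range M.mulVecLin := by
    refine Submodule.eq_of_le_of_finrank_le (range_submatrix_id_le M g) ?_
    exact le_trans hM hrC
  have hSM' : S = LinearMap.range M'.mulVecLin := by
    refine Submodule.eq_of_le_of_finrank_le ?_ (le_trans hM' hrC)
    rw [hS, ← hC']
    exact range_submatrix_id_le M' g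
  have hCle : C.rank ≤ r := by
    have : Module.finrank ℝ S ≤ Module.finrank ℝ (LinearMap.range M.mulVecLin) :=
      le_of_eq (by rw [hSM])
    exact this.trans hM
  have hSr : Module.finrank ℝ S = r := le_antisymm hCle hrC
  -- injectivity of π on S
  set φ : S →ₗ[ℝ] (ι' → ℝ) := π ∘ₗ S.subtype with hφ
  have hrange : Module.finrank ℝ (LinearMap.range φ) = r := by
    rw [hφ, LinearMap.range_comp, Submodule.range_subtype, ← hQmap, hQ]
  have hker : LinearMap.ker φ = ⊥ := by
    have h2 := LinearMap.finrank_range_add_finrank_ker φ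
    rw [hrange, hSr] at h2
    have : Module.finrank ℝ (LinearMap.ker φ) = 0 := by omega
    exact Submodule.finrank_eq_zero.mp this
  -- conclude
  ext i j
  have hMcol : (fun i => M i j) ∈ S := by
    rw [hSM]
    exact ⟨Pi.single j 1, by funext i; simp [Matrix.mulVec_single]⟩
  have hM'col : (fun i => M' i j) ∈ S := by
    rw [hSM']
    exact ⟨Pi.single j 1, by funext i; simp [Matrix.mulVec_single]⟩
  have hdS : (fun i => M i j - M' i j) ∈ S := S.sub_mem hMcol hM'col
  have hzero : φ ⟨_, hdS⟩ = 0 := by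
    funext i'
    simp [hφ, hπ, LinearMap.funLeft, hrow i' j]
  have : (⟨_, hdS⟩ : S) = 0 := by
    rw [← LinearMap.mem_ker, hker] at hzero
    exact hzero
    
  have := congrFun (congrArg Subtype.val this) i
  simpa [sub_eq_zero] using this

/-- A 3×3 block matrix. -/
def block3 {m1 m2 m3 n1 n2 n3 : ℕ}
    (A11 : Matrix (Fin m1) (Fin n1) ℝ) (A12 : Matrix (Fin m1) (Fin n2) ℝ)
    (A13 : Matrix (Fin m1) (Fin n3) ℝ)
    (A21 : Matrix (Fin m2) (Fin n1) ℝ) (A22 : Matrix (Fin m2) (Fin n2) ℝ)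
    (A23 : Matrix (Fin m2) (Fin n3) ℝ)
    (A31 : Matrix (Fin m3) (Fin n1) ℝ) (A32 : Matrix (Fin m3) (Fin n2) ℝ)
    (A33 : Matrix (Fin m3) (Fin n3) ℝ) :
    Matrix ((Fin m1 ⊕ Fin m2) ⊕ Fin m3) ((Fin n1 ⊕ Fin n2) ⊕ Fin n3) ℝ :=
  Matrix.fromBlocks (Matrix.fromBlocks A11 A12 A21 A22) (Matrix.fromRows A13 A23)
    (Matrix.fromCols A31 A32) A33

/-- Two-biclique merging: if the overlap block `Q` has full rank `r`, the corner blocks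
`Z₁` and `Z₂` are uniquely determined among rank-`≤ r` completions. -/
theorem two_biclique_unique_of_overlap_rank {m1 m2 m3 n1 n2 n3 r : ℕ}
    (Z₁ : Matrix (Fin m1) (Fin n1) ℝ) (X₁ : Matrix (Fin m1) (Fin n2) ℝ)
    (X₂ : Matrix (Fin m1) (Fin n3) ℝ)
    (Y₁ : Matrix (Fin m2) (Fin n1) ℝ) (Q : Matrix (Fin m2) (Fin n2) ℝ)
    (X₃ : Matrix (Fin m2) (Fin n3) ℝ)
    (Y₂ : Matrix (Fin m3) (Fin n1) ℝ) (Y₃ : Matrix (Fin m3) (Fin n2) ℝ)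
    (Z₂ : Matrix (Fin m3) (Fin n3) ℝ)
    (hZ : (block3 Z₁ X₁ X₂ Y₁ Q X₃ Y₂ Y₃ Z₂).rank = r) (hQ : Q.rank = r) :
    ∀ (Z₁' : Matrix (Fin m1) (Fin n1) ℝ) (Z₂' : Matrix (Fin m3) (Fin n3) ℝ),
      (block3 Z₁' X₁ X₂ Y₁ Q X₃ Y₂ Y₃ Z₂').rank ≤ r → Z₁' = Z₁ ∧ Z₂' = Z₂ := by
  intro Z₁' Z₂' hZ'
  set f : Fin m2 → (Fin m1 ⊕ Fin m2) ⊕ Fin m3 := fun i => Sum.inl (Sum.inr i) with hf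
  set g : Fin n2 → (Fin n1 ⊕ Fin n2) ⊕ Fin n3 := fun j => Sum.inl (Sum.inr j) with hg
  have hsub : (block3 Z₁' X₁ X₂ Y₁ Q X₃ Y₂ Y₃ Z₂').submatrix f g = Q := by
    ext i j; simp [block3, hf, hg]
  have key : block3 Z₁' X₁ X₂ Y₁ Q X₃ Y₂ Y₃ Z₂' = block3 Z₁ X₁ X₂ Y₁ Q X₃ Y₂ Y₃ Z₂ := by
    apply cross_unique _ _ f g hZ' (le_of_eq hZ) _ _ (by rw [hsub, hQ])
    · intro i j
      rcases j with (j | j) | j <;> simp [block3, hf]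
    · intro i j
      rcases i with (i | i) | i <;> simp [block3, hg]
  constructor
  · ext i j
    have := congrFun (congrFun key (Sum.inl (Sum.inl i))) (Sum.inl (Sum.inl j))
    simpa [block3] using this
  · ext i j
    have := congrFun (congrFun key (Sum.inr i)) (Sum.inr j)
    simpa [block3] using this
end

section
/- The converse of the two-biclique uniqueness criterion fails: there exists a 3×4 real matrix of rank 2 with the staircase pattern [[Z₁, 6, 5, 3], [1, 2, 3, 2], [3, 4, 2, Z₂]] in which the overlap block Q = [2, 3] has rank 1 < 2, yet the unknown entries Z₁ and Z₂ are uniquely determined (Z₁ = 4 and Z₂ = 1) among all rank-2 completions. -/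
open Matrix

private lemma rank3_of_det {A : Matrix (Fin 3) (Fin 3) ℝ} (h : A.det ≠ 0) :
    A.rank = 3 := by
  have := Matrix.rank_of_isUnit A ((Matrix.isUnit_iff_isUnit_det A).mpr (isUnit_iff_ne_zero.mpr h))
  simpa using this

private lemma rank2_of_det {A : Matrix (Fin 2) (Fin 2) ℝ} (h : A.det ≠ 0) :
    A.rank = 2 := by
  have := Matrix.rank_of_isUnit A ((Matrix.isUnit_iff_isUnit_det A).mpr (isUnit_iff_ne_zero.mpr h))
  simpa using this

/-- Counterexample to the converse of the two-biclique criterion: the overlap block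
`[2, 3]` has rank `1 < 2`, yet the staircase completion of rank `≤ 2` is unique,
namely `Z₁ = 4`, `Z₂ = 1`. -/
theorem converse_two_biclique_fails :
    (!![(2 : ℝ), 3]).rank = 1 ∧
    (!![(4 : ℝ), 6, 5, 3; 1, 2, 3, 2; 3, 4, 2, 1]).rank = 2 ∧
    (∀ z₁ z₂ : ℝ,
      (!![z₁, 6, 5, 3; 1, 2, 3, 2; 3, 4, 2, z₂]).rank ≤ 2 ↔ z₁ = 4 ∧ z₂ = 1) := by
  -- rank !![2,3] = 1
  have h1 : (!![(2 : ℝ), 3]).rank = 1 := by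
    refine le_antisymm ?_ ?_
    · simpa using Matrix.rank_le_card_height (!![(2 : ℝ), 3])
    · have hprod : !![(2 : ℝ), 3] * !![(1:ℝ); 0] = !![(2:ℝ)] := by
        ext i j; fin_cases i <;> fin_cases j <;>
          norm_num [Matrix.mul_apply, Fin.sum_univ_two, Matrix.vecHead, Matrix.vecTail]
      have hle := Matrix.rank_mul_le_left (!![(2 : ℝ), 3]) (!![(1:ℝ); 0])
      rw [hprod] at hle
      have h2 : (!![(2:ℝ)]).rank = 1 := by
        have := Matrix.rank_of_isUnit !![(2:ℝ)]
          ((Matrix.isUnit_iff_isUnit_det _).mpr (by norm_num [Matrix.det_fin_one]))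
        simpa using this
      omega
  -- rank ≤ 2 for the completed matrix at (4, 1)
  have hle2 : (!![(4 : ℝ), 6, 5, 3; 1, 2, 3, 2; 3, 4, 2, 1]).rank ≤ 2 := by
    have hprod : (!![(1:ℝ),1;1,0;0,1] : Matrix (Fin 3) (Fin 2) ℝ) *
        !![(1:ℝ), 2, 3, 2; 3, 4, 2, 1] = !![(4 : ℝ), 6, 5, 3; 1, 2, 3, 2; 3, 4, 2, 1] := by
      ext i j; fin_cases i <;> fin_cases j <;>
        norm_num [Matrix.mul_apply, Fin.sum_univ_two, Matrix.vecHead, Matrix.vecTail]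
    have hle := Matrix.rank_mul_le_right (!![(1:ℝ),1;1,0;0,1] : Matrix (Fin 3) (Fin 2) ℝ)
      (!![(1:ℝ), 2, 3, 2; 3, 4, 2, 1])
    rw [hprod] at hle
    exact hle.trans (by simpa using Matrix.rank_le_card_height (!![(1:ℝ), 2, 3, 2; 3, 4, 2, 1]))
  -- rank ≥ 2 for the completed matrix (via the 2×2 submatrix rows 1,2 / cols 0,1)
  have hge2 : 2 ≤ (!![(4 : ℝ), 6, 5, 3; 1, 2, 3, 2; 3, 4, 2, 1]).rank := by
    have hprod : (!![(0:ℝ),1,0;0,0,1] : Matrix (Fin 2) (Fin 3) ℝ) *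
        !![(4 : ℝ), 6, 5, 3; 1, 2, 3, 2; 3, 4, 2, 1] *
        (!![(1:ℝ),0;0,1;0,0;0,0] : Matrix (Fin 4) (Fin 2) ℝ) = !![(1:ℝ),2;3,4] := by
      ext i j; fin_cases i <;> fin_cases j <;>
        norm_num [Matrix.mul_apply, Fin.sum_univ_four, Fin.sum_univ_three,
          Matrix.vecHead, Matrix.vecTail, Matrix.cons_val_two, Matrix.cons_val_three]
    have hle := (Matrix.rank_mul_le_left _ (!![(1:ℝ),0;0,1;0,0;0,0] : Matrix (Fin 4) (Fin 2) ℝ)).trans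
      (Matrix.rank_mul_le_right (!![(0:ℝ),1,0;0,0,1] : Matrix (Fin 2) (Fin 3) ℝ)
        (!![(4 : ℝ), 6, 5, 3; 1, 2, 3, 2; 3, 4, 2, 1]))
    rw [hprod] at hle
    have hr : (!![(1:ℝ),2;3,4]).rank = 2 := rank2_of_det (by norm_num [Matrix.det_fin_two])
    omega
  refine ⟨h1, le_antisymm hle2 hge2, fun z₁ z₂ => ⟨fun h => ?_, ?_⟩⟩
  · -- forward: rank ≤ 2 forces z₁ = 4 and z₂ = 1 via vanishing 3×3 minors
    constructor
    · have hprod : !![z₁, 6, 5, 3; 1, 2, 3, 2; 3, 4, 2, z₂] *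
          (!![(1:ℝ),0,0;0,1,0;0,0,1;0,0,0] : Matrix (Fin 4) (Fin 3) ℝ)
          = !![z₁, 6, 5; 1, 2, 3; 3, 4, 2] := by
        ext i j; fin_cases i <;> fin_cases j <;>
          norm_num [Matrix.mul_apply, Fin.sum_univ_four, Matrix.vecHead, Matrix.vecTail, Matrix.cons_val_two, Matrix.cons_val_three]
      have hle := Matrix.rank_mul_le_left (!![z₁, 6, 5, 3; 1, 2, 3, 2; 3, 4, 2, z₂])
        (!![(1:ℝ),0,0;0,1,0;0,0,1;0,0,0] : Matrix (Fin 4) (Fin 3) ℝ)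
      rw [hprod] at hle
      have hdet : (!![z₁, 6, 5; 1, 2, 3; 3, 4, 2]).det = 0 := by
        by_contra hd
        have := rank3_of_det hd
        omega
      simp [Matrix.det_fin_three] at hdet
      linarith
    · have hprod : !![z₁, 6, 5, 3; 1, 2, 3, 2; 3, 4, 2, z₂] *
          (!![(0:ℝ),0,0;1,0,0;0,1,0;0,0,1] : Matrix (Fin 4) (Fin 3) ℝ)
          = !![(6:ℝ), 5, 3; 2, 3, 2; 4, 2, z₂] := by
        ext i j; fin_cases i <;> fin_cases j <;>
          norm_num [Matrix.mul_apply, Fin.sum_univ_four, Matrix.vecHead, Matrix.vecTail, Matrix.cons_val_two, Matrix.cons_val_three]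
      have hle := Matrix.rank_mul_le_left (!![z₁, 6, 5, 3; 1, 2, 3, 2; 3, 4, 2, z₂])
        (!![(0:ℝ),0,0;1,0,0;0,1,0;0,0,1] : Matrix (Fin 4) (Fin 3) ℝ)
      rw [hprod] at hle
      have hdet : (!![(6:ℝ), 5, 3; 2, 3, 2; 4, 2, z₂]).det = 0 := by
        by_contra hd
        have := rank3_of_det hd
        omega
      simp [Matrix.det_fin_three] at hdet
      linarith
  · rintro ⟨rfl, rfl⟩
    exact hle2
end

section
/- Let M = [[E, F], [A, B], [C, D]] be a real matrix of rank r where the blocks A, B, C, F are fixed and E, D are unknown. Then M is the unique rank-≤-r matrix with those fixed blocks if and only if rank(A) = r and rank(B) = r. -/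
open Matrix

/-- A 3×2 block matrix with block rows `(R11, R12)`, `(R21, R22)`, `(R31, R32)`. -/
def block32 {m1 m2 m3 n1 n2 : ℕ}
    (R11 : Matrix (Fin m1) (Fin n1) ℝ) (R12 : Matrix (Fin m1) (Fin n2) ℝ)
    (R21 : Matrix (Fin m2) (Fin n1) ℝ) (R22 : Matrix (Fin m2) (Fin n2) ℝ)
    (R31 : Matrix (Fin m3) (Fin n1) ℝ) (R32 : Matrix (Fin m3) (Fin n2) ℝ) :
    Matrix ((Fin m1 ⊕ Fin m2) ⊕ Fin m3) (Fin n1 ⊕ Fin n2) ℝ :=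
  Matrix.fromRows (Matrix.fromBlocks R11 R12 R21 R22) (Matrix.fromCols R31 R32)

open Matrix

-- basic rank lemmas
section aux
variable {p q n : ℕ} {ι κ : Type*} [Fintype ι] [Fintype κ] [DecidableEq κ]
set_option linter.unusedSectionVars false

lemma rank_eq_of_mulVec_inj (X : Matrix ι (Fin q) ℝ)
    (h : ∀ y, X *ᵥ y = 0 → y = 0) : X.rank = q := by
  have hker : LinearMap.ker X.mulVecLin = ⊥ := LinearMap.ker_eq_bot'.mpr h
  have := LinearMap.finrank_range_add_finrank_ker X.mulVecLin
  rw [hker, finrank_bot] at this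
  simpa [Matrix.rank, Module.finrank_fintype_fun_eq_card] using this

lemma rank_eq_of_vecMul_inj (Y : Matrix (Fin p) κ ℝ)
    (h : ∀ x, x ᵥ* Y = 0 → x = 0) : Y.rank = p := by
  rw [← Matrix.rank_transpose]
  exact rank_eq_of_mulVec_inj _ (fun y hy => h y (by rwa [Matrix.mulVec_transpose] at hy))

lemma mulVec_inj_of_rank (X : Matrix ι (Fin q) ℝ) (h : X.rank = q) :
    ∀ y, X *ᵥ y = 0 → y = 0 := by
  have := LinearMap.finrank_range_add_finrank_ker X.mulVecLin
  rw [show Module.finrank ℝ ↥(LinearMap.range X.mulVecLin) = X.rank from rfl, h,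
    Module.finrank_fintype_fun_eq_card, Fintype.card_fin] at this
  have hker : LinearMap.ker X.mulVecLin = ⊥ :=
    Submodule.finrank_eq_zero.mp (by omega)
  exact fun y hy => LinearMap.ker_eq_bot'.mp hker y hy

lemma vecMul_inj_of_rank (Y : Matrix (Fin p) κ ℝ) (h : Y.rank = p) :
    ∀ x, x ᵥ* Y = 0 → x = 0 := by
  intro x hx
  exact mulVec_inj_of_rank Yᵀ (by rw [Matrix.rank_transpose, h]) x
    (by rwa [Matrix.mulVec_transpose])

lemma surjective_mulVecLin_of_rank (V : Matrix (Fin p) κ ℝ) (h : V.rank = p) :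
    Function.Surjective V.mulVecLin := by
  rw [← LinearMap.range_eq_top]
  apply Submodule.eq_top_of_finrank_eq
  rw [show Module.finrank ℝ ↥(LinearMap.range V.mulVecLin) = V.rank from rfl, h,
    Module.finrank_fintype_fun_eq_card, Fintype.card_fin]

lemma exists_right_inverse (V : Matrix (Fin p) κ ℝ) (h : V.rank = p) :
    ∃ W : Matrix κ (Fin p) ℝ, V * W = 1 := by
  have hsurj := surjective_mulVecLin_of_rank V h
  choose g hg using hsurj
  refine ⟨Matrix.of fun j k => g (Pi.single k 1) j, ?_⟩
  ext l k
  have h1 : (V *ᵥ g (Pi.single k 1)) l = (Pi.single k 1 : Fin p → ℝ) l := by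
    rw [show V *ᵥ g (Pi.single k 1) = V.mulVecLin (g (Pi.single k 1)) from rfl, hg]
  simpa [Matrix.mul_apply, Matrix.mulVec, dotProduct, Matrix.one_apply,
    Pi.single_apply] using h1

lemma rank_mul_full (X : Matrix ι (Fin q) ℝ) (Y : Matrix (Fin q) κ ℝ)
    (hX : ∀ y, X *ᵥ y = 0 → y = 0) (hY : ∀ x, x ᵥ* Y = 0 → x = 0) :
    (X * Y).rank = q := by
  have hYsurj := surjective_mulVecLin_of_rank Y (rank_eq_of_vecMul_inj Y hY)
  have : (X * Y).rank = X.rank := by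
    rw [Matrix.rank, Matrix.mulVecLin_mul,
      LinearMap.range_comp_of_range_eq_top _ (LinearMap.range_eq_top.mpr hYsurj)]
    rfl
  rw [this, rank_eq_of_mulVec_inj X hX]

end aux
open Matrix

set_option linter.unusedSectionVars false
section aux2
variable {ι κ μ : Type*} [Fintype κ] [Fintype ι]

lemma mul_vecMulVec (U : Matrix ι κ ℝ) (y : κ → ℝ) (w : μ → ℝ) :
    U * vecMulVec y w = vecMulVec (U *ᵥ y) w := by
  ext i j
  simp [Matrix.mul_apply, vecMulVec_apply, Matrix.mulVec, dotProduct,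
    Finset.sum_mul, mul_assoc]

lemma vecMulVec_mul {η : Type*} (u : η → ℝ) (q : ι → ℝ) (V : Matrix ι μ ℝ) :
    vecMulVec u q * V = vecMulVec u (q ᵥ* V) := by
  ext i j
  simp [Matrix.mul_apply, vecMulVec_apply, Matrix.vecMul, dotProduct,
    Finset.mul_sum, mul_assoc]

lemma vecMul_vecMulVec (q : ι → ℝ) (y : ι → ℝ) (w : μ → ℝ) :
    q ᵥ* vecMulVec y w = (q ⬝ᵥ y) • w := by
  ext j
  simp [Matrix.vecMul, vecMulVec_apply, dotProduct, Finset.sum_mul, mul_assoc]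

lemma vecMulVec_ne_zero {u : ι → ℝ} {w : μ → ℝ} (hu : u ≠ 0) (hw : w ≠ 0) :
    vecMulVec u w ≠ 0 := by
  obtain ⟨i, hi⟩ := Function.ne_iff.mp hu
  obtain ⟨j, hj⟩ := Function.ne_iff.mp hw
  intro h
  have := congrFun (congrFun h i) j
  simp only [vecMulVec_apply, Matrix.zero_apply] at this
  exact (mul_ne_zero (by simpa using hi) (by simpa using hj)) this

-- rank of a column submatrix
lemma rank_col_submatrix_le {κ' : Type*} [Fintype κ'] [DecidableEq κ]
    (M : Matrix ι κ ℝ) (f : κ' → κ) :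
    (M.submatrix id f).rank ≤ M.rank := by
  apply Submodule.finrank_mono
  rintro _ ⟨v, rfl⟩
  refine ⟨fun j => ∑ k, if f k = j then v k else 0, ?_⟩
  ext i
  simp only [Matrix.mulVecLin_apply, Matrix.mulVec, dotProduct,
    Matrix.submatrix_apply, id_eq, Finset.mul_sum]
  rw [Finset.sum_comm]
  refine Finset.sum_congr rfl fun k _ => ?_
  simp [mul_ite, Finset.sum_ite_eq]

lemma rows_ker {n q : ℕ} (G : Matrix ι (Fin n) ℝ)
    (e : Fin q → ι) (hrk : G.rank ≤ (G.submatrix e id).rank)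
    (v : Fin n → ℝ) (hv : G.submatrix e id *ᵥ v = 0) : G *ᵥ v = 0 := by
  set S := G.submatrix e id with hS
  have hle : LinearMap.ker G.mulVecLin ≤ LinearMap.ker S.mulVecLin := by
    intro x hx
    rw [LinearMap.mem_ker] at hx ⊢
    ext k
    have := congrFun hx (e k)
    simpa [Matrix.mulVecLin_apply, Matrix.mulVec, dotProduct, hS] using this
  have h1 := LinearMap.finrank_range_add_finrank_ker G.mulVecLin
  have h2 := LinearMap.finrank_range_add_finrank_ker S.mulVecLin
  rw [Module.finrank_fintype_fun_eq_card, Fintype.card_fin] at h1 h2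
  have hrkG : Module.finrank ℝ ↥(LinearMap.range G.mulVecLin) = G.rank := rfl
  have hrkS : Module.finrank ℝ ↥(LinearMap.range S.mulVecLin) = S.rank := rfl
  rw [hrkG] at h1; rw [hrkS] at h2
  have heq : LinearMap.ker G.mulVecLin = LinearMap.ker S.mulVecLin :=
    Submodule.eq_of_le_of_finrank_le hle (by omega)
  have : v ∈ LinearMap.ker G.mulVecLin := by
    rw [heq, LinearMap.mem_ker]
    exact hv
  simpa [LinearMap.mem_ker] using this

end aux2
open Matrix

lemma exists_factorization {ι κ : Type*} [Fintype ι] [Fintype κ] [DecidableEq κ] {r : ℕ}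
    (P : Matrix ι κ ℝ) (h : P.rank ≤ r) :
    ∃ (U : Matrix ι (Fin r) ℝ) (V : Matrix (Fin r) κ ℝ), P = U * V := by
  classical
  set W := LinearMap.range P.mulVecLin with hW
  set d := Module.finrank ℝ W with hdd
  have hd : d = P.rank := rfl
  let b : Module.Basis (Fin d) ℝ W := Module.finBasis ℝ W
  have hmem : ∀ j : κ, (fun i => P i j) ∈ W := by
    intro j
    refine ⟨Pi.single j 1, ?_⟩
    ext i
    simp [Matrix.mulVecLin_apply, Matrix.mulVec, dotProduct, Pi.single_apply,
      mul_ite, Finset.sum_ite_eq]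
  let w : κ → W := fun j => ⟨fun i => P i j, hmem j⟩
  let U0 : Matrix ι (Fin d) ℝ := Matrix.of fun i k => (b k : ι → ℝ) i
  let V0 : Matrix (Fin d) κ ℝ := Matrix.of fun k j => b.repr (w j) k
  have hfac0 : P = U0 * V0 := by
    ext i j
    have := congrArg (fun (x : W) => (x : ι → ℝ) i) (b.sum_repr (w j))
    simp only [Submodule.coe_sum, Finset.sum_apply, SetLike.val_smul, Pi.smul_apply,
      smul_eq_mul] at this
    rw [Matrix.mul_apply]
    simp only [U0, V0, Matrix.of_apply]
    rw [show P i j = ((w j : W) : ι → ℝ) i from rfl, ← this]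
    exact Finset.sum_congr rfl fun k _ => mul_comm _ _
  have hdr : d ≤ r := hd.trans_le h
  have hcast : d + (r - d) = r := Nat.add_sub_cancel' hdr
  let e : Fin d ⊕ Fin (r - d) ≃ Fin r := finSumFinEquiv.trans (finCongr hcast)
  refine ⟨(Matrix.fromCols U0 0).submatrix id e.symm,
    (Matrix.fromRows V0 0).submatrix e.symm id, ?_⟩
  rw [Matrix.submatrix_mul_equiv (Matrix.fromCols U0 0) (Matrix.fromRows V0 0) id e.symm id,
    Matrix.fromCols_mul_fromRows]
  simp [hfac0]
open Matrix


section blk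
variable {m1 m2 m3 n1 n2 : ℕ}
  {R11 : Matrix (Fin m1) (Fin n1) ℝ} {R12 : Matrix (Fin m1) (Fin n2) ℝ}
  {R21 : Matrix (Fin m2) (Fin n1) ℝ} {R22 : Matrix (Fin m2) (Fin n2) ℝ}
  {R31 : Matrix (Fin m3) (Fin n1) ℝ} {R32 : Matrix (Fin m3) (Fin n2) ℝ}

@[simp] lemma block32_apply_11 (i j) :
    block32 R11 R12 R21 R22 R31 R32 (Sum.inl (Sum.inl i)) (Sum.inl j) = R11 i j := rfl
@[simp] lemma block32_apply_12 (i j) :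
    block32 R11 R12 R21 R22 R31 R32 (Sum.inl (Sum.inl i)) (Sum.inr j) = R12 i j := rfl
@[simp] lemma block32_apply_21 (i j) :
    block32 R11 R12 R21 R22 R31 R32 (Sum.inl (Sum.inr i)) (Sum.inl j) = R21 i j := rfl
@[simp] lemma block32_apply_22 (i j) :
    block32 R11 R12 R21 R22 R31 R32 (Sum.inl (Sum.inr i)) (Sum.inr j) = R22 i j := rfl
@[simp] lemma block32_apply_31 (i j) :
    block32 R11 R12 R21 R22 R31 R32 (Sum.inr i) (Sum.inl j) = R31 i j := rfl
@[simp] lemma block32_apply_32 (i j) :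
    block32 R11 R12 R21 R22 R31 R32 (Sum.inr i) (Sum.inr j) = R32 i j := rfl
end blk

lemma mul_right_cancel_ker {p q s t : ℕ} (B : Matrix (Fin p) (Fin q) ℝ)
    (F : Matrix (Fin s) (Fin q) ℝ)
    (hk : ∀ v, B *ᵥ v = 0 → F *ᵥ v = 0) (X X' : Matrix (Fin q) (Fin t) ℝ)
    (h : B * X = B * X') : F * X = F * X' := by
  ext i j
  have hv : B *ᵥ (fun l => X l j - X' l j) = 0 := by
    ext i'
    have h0 := congrFun (congrFun h i') j
    simp only [Matrix.mul_apply] at h0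
    simp [Matrix.mulVec, dotProduct, mul_sub, Finset.sum_sub_distrib, h0]
  have h1 := congrFun (hk _ hv) i
  simp only [Matrix.mulVec, dotProduct, mul_sub, Finset.sum_sub_distrib,
    Pi.zero_apply, sub_eq_zero] at h1
  simpa [Matrix.mul_apply] using h1

section back
variable {m1 m2 m3 n1 n2 r : ℕ}
    {E : Matrix (Fin m1) (Fin n1) ℝ} {F : Matrix (Fin m1) (Fin n2) ℝ}
    {A : Matrix (Fin m2) (Fin n1) ℝ} {B : Matrix (Fin m2) (Fin n2) ℝ}
    {C : Matrix (Fin m3) (Fin n1) ℝ} {D : Matrix (Fin m3) (Fin n2) ℝ}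

/-- Any low-rank completion has its unknown blocks expressible through solutions of
linear systems in the known blocks. -/
lemma completion_repr (E'' : Matrix (Fin m1) (Fin n1) ℝ) (D'' : Matrix (Fin m3) (Fin n2) ℝ)
    (h'' : (block32 E'' F A B C D'').rank ≤ r)
    (hA : A.rank = r) (hB : B.rank = r) :
    ∃ (X : Matrix (Fin n2) (Fin n1) ℝ) (Y : Matrix (Fin n1) (Fin n2) ℝ),
      E'' = F * X ∧ B * X = A ∧ D'' = C * Y ∧ A * Y = B := by
  obtain ⟨U, V, hUV⟩ := exists_factorization _ h''
  set U1 : Matrix (Fin m1) (Fin r) ℝ := U.submatrix (fun i => Sum.inl (Sum.inl i)) id with hU1d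
  set U2 : Matrix (Fin m2) (Fin r) ℝ := U.submatrix (fun i => Sum.inl (Sum.inr i)) id with hU2d
  set U3 : Matrix (Fin m3) (Fin r) ℝ := U.submatrix Sum.inr id with hU3d
  set V1 : Matrix (Fin r) (Fin n1) ℝ := V.submatrix id Sum.inl with hV1d
  set V2 : Matrix (Fin r) (Fin n2) ℝ := V.submatrix id Sum.inr with hV2d
  have hE : E'' = U1 * V1 := by
    ext i j
    have h0 := congrFun (congrFun hUV (Sum.inl (Sum.inl i))) (Sum.inl j)
    simpa [Matrix.mul_apply, hU1d, hU2d, hU3d, hV1d, hV2d] using h0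
  have hF : F = U1 * V2 := by
    ext i j
    have h0 := congrFun (congrFun hUV (Sum.inl (Sum.inl i))) (Sum.inr j)
    simpa [Matrix.mul_apply, hU1d, hU2d, hU3d, hV1d, hV2d] using h0
  have hA2 : A = U2 * V1 := by
    ext i j
    have h0 := congrFun (congrFun hUV (Sum.inl (Sum.inr i))) (Sum.inl j)
    simpa [Matrix.mul_apply, hU1d, hU2d, hU3d, hV1d, hV2d] using h0
  have hB2 : B = U2 * V2 := by
    ext i j
    have h0 := congrFun (congrFun hUV (Sum.inl (Sum.inr i))) (Sum.inr j)
    simpa [Matrix.mul_apply, hU1d, hU2d, hU3d, hV1d, hV2d] using h0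
  have hC : C = U3 * V1 := by
    ext i j
    have h0 := congrFun (congrFun hUV (Sum.inr i)) (Sum.inl j)
    simpa [Matrix.mul_apply, hU1d, hU2d, hU3d, hV1d, hV2d] using h0
  have hD : D'' = U3 * V2 := by
    ext i j
    have h0 := congrFun (congrFun hUV (Sum.inr i)) (Sum.inr j)
    simpa [Matrix.mul_apply, hU1d, hU2d, hU3d, hV1d, hV2d] using h0
  have hV1 : V1.rank = r := by
    refine le_antisymm (Matrix.rank_le_height V1) ?_
    calc r = A.rank := hA.symm
    _ ≤ V1.rank := by rw [hA2]; exact Matrix.rank_mul_le_right U2 V1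
  have hV2 : V2.rank = r := by
    refine le_antisymm (Matrix.rank_le_height V2) ?_
    calc r = B.rank := hB.symm
    _ ≤ V2.rank := by rw [hB2]; exact Matrix.rank_mul_le_right U2 V2
  obtain ⟨W1, hW1⟩ := exists_right_inverse V1 hV1
  obtain ⟨W2, hW2⟩ := exists_right_inverse V2 hV2
  have hU1e : U1 = F * W2 := by rw [hF, Matrix.mul_assoc, hW2, Matrix.mul_one]
  have hU3e : U3 = C * W1 := by rw [hC, Matrix.mul_assoc, hW1, Matrix.mul_one]
  refine ⟨W2 * V1, W1 * V2, ?_, ?_, ?_, ?_⟩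
  · rw [hE, hU1e, Matrix.mul_assoc]
  · rw [hB2, hA2, Matrix.mul_assoc, ← Matrix.mul_assoc V2, hW2, Matrix.one_mul]
  · rw [hD, hU3e, Matrix.mul_assoc]
  · rw [hA2, hB2, Matrix.mul_assoc, ← Matrix.mul_assoc V1, hW1, Matrix.one_mul]

lemma backward_dir
    (hM : (block32 E F A B C D).rank = r)
    (hA : A.rank = r) (hB : B.rank = r)
    (E' : Matrix (Fin m1) (Fin n1) ℝ) (D' : Matrix (Fin m3) (Fin n2) ℝ)
    (h' : (block32 E' F A B C D').rank ≤ r) :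
    E' = E ∧ D' = D := by
  set M := block32 E F A B C D with hMdef
  -- kernel of B is contained in kernel of F
  have kerBF : ∀ v, B *ᵥ v = 0 → F *ᵥ v = 0 := by
    intro v hv
    set N : Matrix ((Fin m1 ⊕ Fin m2) ⊕ Fin m3) (Fin n2) ℝ := M.submatrix id Sum.inr with hN
    have hBN : N.submatrix (fun i => Sum.inl (Sum.inr i)) id = B := by ext i j; rfl
    have hrk : N.rank ≤ (N.submatrix (fun i => Sum.inl (Sum.inr i)) id).rank := by
      rw [hBN, hB]
      exact (rank_col_submatrix_le M Sum.inr).trans (le_of_eq hM)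
    have h0 := rows_ker N _ hrk v (by rw [hBN]; exact hv)
    ext i
    have h1 := congrFun h0 (Sum.inl (Sum.inl i))
    simpa [Matrix.mulVec, dotProduct, hN, hMdef] using h1
  have kerAC : ∀ v, A *ᵥ v = 0 → C *ᵥ v = 0 := by
    intro v hv
    set G : Matrix ((Fin m1 ⊕ Fin m2) ⊕ Fin m3) (Fin n1) ℝ := M.submatrix id Sum.inl with hG
    have hAG : G.submatrix (fun i => Sum.inl (Sum.inr i)) id = A := by ext i j; rfl
    have hrk : G.rank ≤ (G.submatrix (fun i => Sum.inl (Sum.inr i)) id).rank := by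
      rw [hAG, hA]
      exact (rank_col_submatrix_le M Sum.inl).trans (le_of_eq hM)
    have h0 := rows_ker G _ hrk v (by rw [hAG]; exact hv)
    ext i
    have h1 := congrFun h0 (Sum.inr i)
    simpa [Matrix.mulVec, dotProduct, hG, hMdef] using h1
  obtain ⟨X', Y', hE', hX', hD', hY'⟩ := completion_repr E' D' h' hA hB
  obtain ⟨X, Y, hE, hX, hD, hY⟩ := completion_repr E D (le_of_eq hM) hA hB
  constructor
  · rw [hE', hE]
    exact mul_right_cancel_ker B F kerBF X' X (by rw [hX', hX])
  · rw [hD', hD]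
    exact mul_right_cancel_ker A C kerAC Y' Y (by rw [hY', hY])

end back

section fwd
variable {m1 m2 m3 n1 n2 r : ℕ}
    {E : Matrix (Fin m1) (Fin n1) ℝ} {F : Matrix (Fin m1) (Fin n2) ℝ}
    {A : Matrix (Fin m2) (Fin n1) ℝ} {B : Matrix (Fin m2) (Fin n2) ℝ}
    {C : Matrix (Fin m3) (Fin n1) ℝ} {D : Matrix (Fin m3) (Fin n2) ℝ}

lemma forward_dir (hm1 : 0 < m1) (hm3 : 0 < m3) (hn1 : 0 < n1) (hn2 : 0 < n2)
    (hM : (block32 E F A B C D).rank = r)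
    (huniq : ∀ (E' : Matrix (Fin m1) (Fin n1) ℝ) (D' : Matrix (Fin m3) (Fin n2) ℝ),
        (block32 E' F A B C D').rank ≤ r → E' = E ∧ D' = D) :
    A.rank = r ∧ B.rank = r := by
  obtain ⟨U, V, hUV⟩ := exists_factorization _ (le_of_eq hM)
  have hrankU : U.rank = r := by
    refine le_antisymm ((Matrix.rank_le_card_width U).trans (by simp)) ?_
    have h := Matrix.rank_mul_le_left U V; rw [← hUV, hM] at h; exact h
  have hrankV : V.rank = r := by
    refine le_antisymm ((Matrix.rank_le_card_height V).trans (by simp)) ?_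
    have h := Matrix.rank_mul_le_right U V; rw [← hUV, hM] at h; exact h
  have hUinj : ∀ y, U *ᵥ y = 0 → y = 0 := mulVec_inj_of_rank U hrankU
  have hVinj : ∀ x, x ᵥ* V = 0 → x = 0 :=
    vecMul_inj_of_rank V hrankV
  set U1 : Matrix (Fin m1) (Fin r) ℝ := U.submatrix (fun i => Sum.inl (Sum.inl i)) id with hU1d
  set U2 : Matrix (Fin m2) (Fin r) ℝ := U.submatrix (fun i => Sum.inl (Sum.inr i)) id with hU2d
  set U3 : Matrix (Fin m3) (Fin r) ℝ := U.submatrix Sum.inr id with hU3d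
  set V1 : Matrix (Fin r) (Fin n1) ℝ := V.submatrix id Sum.inl with hV1d
  set V2 : Matrix (Fin r) (Fin n2) ℝ := V.submatrix id Sum.inr with hV2d
  have hrank' : ∀ X : Matrix ((Fin m1 ⊕ Fin m2) ⊕ Fin m3) (Fin r) ℝ,
      ∀ Y : Matrix (Fin r) (Fin n1 ⊕ Fin n2) ℝ, (X * Y).rank ≤ r :=
    fun X Y => (Matrix.rank_mul_le_left X Y).trans ((Matrix.rank_le_card_width X).trans (by simp))
  -- Claim 1 : the left kernel of V1 is trivial
  have claim1 : ∀ x : Fin r → ℝ, x ᵥ* V1 = 0 → x = 0 := by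
    intro x hx
    by_contra hx0
    set t : Fin n2 → ℝ := x ᵥ* V2 with ht
    have htne : t ≠ 0 := by
      intro h0
      refine hx0 (hVinj x ?_)
      ext j
      rcases j with j | j
      · exact congrFun hx j
      · exact congrFun h0 j
    set p : (Fin m1 ⊕ Fin m2) ⊕ Fin m3 → ℝ := Sum.elim (fun _ => 0) (fun _ => 1) with hp
    have hxV1 : ∀ j, (x ᵥ* V) (Sum.inl j) = 0 := fun j => congrFun hx j
    have hxV2 : ∀ j, (x ᵥ* V) (Sum.inr j) = t j := fun j => rfl
    have hM' : block32 E F A B C (D + vecMulVec (fun _ => (1:ℝ)) t)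
        = (U + vecMulVec p x) * V := by
      rw [Matrix.add_mul, ← hUV, _root_.vecMulVec_mul]
      ext i j
      rcases i with (i | i) | i <;> rcases j with j | j <;>
        simp [Matrix.add_apply, vecMulVec_apply, hp, hxV1, hxV2]
    have hD' := (huniq E _ (by rw [hM']; exact hrank' _ _)).2
    have : vecMulVec (fun _ : Fin m3 => (1:ℝ)) t = 0 := by
      have := congrArg (fun X => X - D) hD'
      simpa [add_sub_cancel_left] using this
    exact vecMulVec_ne_zero (by
      intro h0
      have := congrFun h0 ⟨0, hm3⟩
      norm_num at this) htne this
  -- Claim 2 : the left kernel of V2 is trivial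
  have claim2 : ∀ x : Fin r → ℝ, x ᵥ* V2 = 0 → x = 0 := by
    intro x hx
    by_contra hx0
    set t : Fin n1 → ℝ := x ᵥ* V1 with ht
    have htne : t ≠ 0 := by
      intro h0
      refine hx0 (hVinj x ?_)
      ext j
      rcases j with j | j
      · exact congrFun h0 j
      · exact congrFun hx j
    set p : (Fin m1 ⊕ Fin m2) ⊕ Fin m3 → ℝ :=
      Sum.elim (Sum.elim (fun _ => 1) (fun _ => 0)) (fun _ => 0) with hp
    have hxV2 : ∀ j, (x ᵥ* V) (Sum.inr j) = 0 := fun j => congrFun hx j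
    have hxV1 : ∀ j, (x ᵥ* V) (Sum.inl j) = t j := fun j => rfl
    have hM' : block32 (E + vecMulVec (fun _ => (1:ℝ)) t) F A B C D
        = (U + vecMulVec p x) * V := by
      rw [Matrix.add_mul, ← hUV, _root_.vecMulVec_mul]
      ext i j
      rcases i with (i | i) | i <;> rcases j with j | j <;>
        simp [Matrix.add_apply, vecMulVec_apply, hp, hxV1, hxV2]
    have hE' := (huniq _ D (by rw [hM']; exact hrank' _ _)).1
    have : vecMulVec (fun _ : Fin m1 => (1:ℝ)) t = 0 := by
      have := congrArg (fun X => X - E) hE'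
      simpa [add_sub_cancel_left] using this
    exact vecMulVec_ne_zero (by
      intro h0
      have := congrFun h0 ⟨0, hm1⟩
      norm_num at this) htne this
  -- Claim 3 : U2 has trivial kernel
  have claim3 : ∀ y : Fin r → ℝ, U2 *ᵥ y = 0 → y = 0 := by
    intro y hy
    by_contra hy0
    set a : Fin m1 → ℝ := U1 *ᵥ y with hadef
    set c : Fin m3 → ℝ := U3 *ᵥ y with hcdef
    have hUy2 : ∀ i, (U *ᵥ y) (Sum.inl (Sum.inr i)) = 0 := fun i => congrFun hy i
    have hUya : ∀ i, (U *ᵥ y) (Sum.inl (Sum.inl i)) = a i := fun i => rfl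
    have hUyc : ∀ i, (U *ᵥ y) (Sum.inr i) = c i := fun i => rfl
    by_cases hc : c = 0
    · -- modify E
      have ha : a ≠ 0 := by
        intro ha0
        refine hy0 (hUinj y ?_)
        ext i
        rcases i with (i | i) | i
        · rw [hUya]; exact congrFun ha0 i
        · exact hUy2 i
        · rw [hUyc]; exact congrFun hc i
      set z1 : Fin n1 → ℝ := fun _ => 1 with hz1
      have hM' : block32 (E + vecMulVec a z1) F A B C D
          = U * (V + vecMulVec y (Sum.elim z1 0)) := by
        rw [Matrix.mul_add, ← hUV, _root_.mul_vecMulVec]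
        ext i j
        rcases i with (i | i) | i <;> rcases j with j | j <;>
          simp [Matrix.add_apply, vecMulVec_apply, hUya, hUy2, hUyc, hc]
      have hE' := (huniq _ D (by
        rw [hM']
        exact (Matrix.rank_mul_le_left _ _).trans
          ((Matrix.rank_le_card_width U).trans (by simp)))).1
      have : vecMulVec a z1 = 0 := by
        have := congrArg (fun X => X - E) hE'
        simpa [add_sub_cancel_left] using this
      exact vecMulVec_ne_zero ha (by
        intro h0
        have := congrFun h0 ⟨0, hn1⟩
        norm_num [hz1] at this) this
    by_cases ha : a = 0
    · -- modify D
      set z2 : Fin n2 → ℝ := fun _ => 1 with hz2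
      have hM' : block32 E F A B C (D + vecMulVec c z2)
          = U * (V + vecMulVec y (Sum.elim 0 z2)) := by
        rw [Matrix.mul_add, ← hUV, _root_.mul_vecMulVec]
        ext i j
        rcases i with (i | i) | i <;> rcases j with j | j <;>
          simp [Matrix.add_apply, vecMulVec_apply, hUya, hUy2, hUyc, ha]
      have hD' := (huniq E _ (by
        rw [hM']
        exact (Matrix.rank_mul_le_left _ _).trans
          ((Matrix.rank_le_card_width U).trans (by simp)))).2
      have : vecMulVec c z2 = 0 := by
        have := congrArg (fun X => X - D) hD'
        simpa [add_sub_cancel_left] using this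
      exact vecMulVec_ne_zero hc (by
        intro h0
        have := congrFun h0 ⟨0, hn2⟩
        norm_num [hz2] at this) this
    · -- general case: modify both E and D
      set s : ℝ := if y ⬝ᵥ y = 1 then 2 else 1 with hs
      have hs0 : s ≠ 0 := by
        rw [hs]; split <;> norm_num
      set q : Fin r → ℝ := s • y with hq
      have hq0 : q ≠ 0 := smul_ne_zero hs0 hy0
      set β : ℝ := q ⬝ᵥ y with hβdef
      have hβ : β ≠ 1 := by
        rw [hβdef, hq, smul_dotProduct]
        rcases eq_or_ne (y ⬝ᵥ y) 1 with h1 | h1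
        · rw [hs, if_pos h1, h1]; norm_num
        · rw [hs, if_neg h1]; simpa using h1
      have h1β : (1 : ℝ) - β ≠ 0 := sub_ne_zero.mpr (Ne.symm hβ)
      set z1 : Fin n1 → ℝ := (1 - β)⁻¹ • (q ᵥ* V1) with hz1
      have hz1ne : z1 ≠ 0 := by
        refine smul_ne_zero (inv_ne_zero h1β) ?_
        intro h0
        exact hq0 (claim1 q h0)
      have hqV1 : q ᵥ* V1 = (1 - β) • z1 := by
        rw [hz1, smul_inv_smul₀ h1β]
      set p : (Fin m1 ⊕ Fin m2) ⊕ Fin m3 → ℝ :=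
        Sum.elim (fun _ => 0) (fun i => -(c i)) with hp
      set zz : Fin n1 ⊕ Fin n2 → ℝ := Sum.elim z1 0 with hzz
      have hqV1' : ∀ j, (q ᵥ* V) (Sum.inl j) = (1 - β) * z1 j := by
        intro j
        have := congrFun hqV1 j
        exact this
      have hqV2' : ∀ j, (q ᵥ* V) (Sum.inr j) = (q ᵥ* V2) j := fun j => rfl
      have hexp : (U + vecMulVec p q) * (V + vecMulVec y zz)
          = block32 E F A B C D + vecMulVec (U *ᵥ y) zz
            + vecMulVec p (q ᵥ* V) + vecMulVec p (β • zz) := by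
        rw [Matrix.add_mul, Matrix.mul_add, Matrix.mul_add, ← hUV, _root_.mul_vecMulVec,
          _root_.vecMulVec_mul, _root_.vecMulVec_mul, _root_.vecMul_vecMulVec, ← hβdef]
        abel
      have hM' : block32 (E + vecMulVec a z1) F A B C (D - vecMulVec c (q ᵥ* V2))
          = (U + vecMulVec p q) * (V + vecMulVec y zz) := by
        rw [hexp]
        ext i j
        rcases i with (i | i) | i <;> rcases j with j | j <;>
          simp [Matrix.add_apply, Matrix.sub_apply, vecMulVec_apply, hp, hzz,
            hUya, hUy2, hUyc, hqV1', hqV2'] <;> ring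
      have hE' := (huniq _ _ (by rw [hM']; exact hrank' _ _)).1
      have : vecMulVec a z1 = 0 := by
        have := congrArg (fun X => X - E) hE'
        simpa [add_sub_cancel_left] using this
      exact vecMulVec_ne_zero ha hz1ne this
  -- conclude
  have hA2 : A = U2 * V1 := by
    ext i j
    have h0 := congrFun (congrFun hUV (Sum.inl (Sum.inr i))) (Sum.inl j)
    simpa [Matrix.mul_apply, hU2d, hV1d, hV2d] using h0
  have hB2 : B = U2 * V2 := by
    ext i j
    have h0 := congrFun (congrFun hUV (Sum.inl (Sum.inr i))) (Sum.inr j)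
    simpa [Matrix.mul_apply, hU2d, hV1d, hV2d] using h0
  constructor
  · rw [hA2]; exact rank_mul_full U2 V1 claim3 claim1
  · rw [hB2]; exact rank_mul_full U2 V2 claim3 claim2

end fwd

/-- For `M = [[E,F],[A,B],[C,D]]` of rank `r` with `A, B, C, F` fixed, the completion
is unique iff `rank A = r` and `rank B = r`. -/
theorem three_biclique_unique_iff {m1 m2 m3 n1 n2 r : ℕ}
    (hm1 : 0 < m1) (hm2 : 0 < m2) (hm3 : 0 < m3) (hn1 : 0 < n1) (hn2 : 0 < n2) (hr : 1 ≤ r)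
    (E : Matrix (Fin m1) (Fin n1) ℝ) (F : Matrix (Fin m1) (Fin n2) ℝ)
    (A : Matrix (Fin m2) (Fin n1) ℝ) (B : Matrix (Fin m2) (Fin n2) ℝ)
    (C : Matrix (Fin m3) (Fin n1) ℝ) (D : Matrix (Fin m3) (Fin n2) ℝ)
    (hM : (block32 E F A B C D).rank = r) :
    (∀ (E' : Matrix (Fin m1) (Fin n1) ℝ) (D' : Matrix (Fin m3) (Fin n2) ℝ),
        (block32 E' F A B C D').rank ≤ r → E' = E ∧ D' = D) ↔
      A.rank = r ∧ B.rank = r := by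
  constructor
  · intro h
    exact forward_dir hm1 hm3 hn1 hn2 hM h
  · rintro ⟨hA, hB⟩ E' D' h'
    exact backward_dir hM hA hB E' D' h'
end

section
/- (Sufficiency direction) Let M = [[E, F], [A, B], [C, D]] be a real matrix of rank r with A, B, C, F fixed. If rank(A) = r and rank(B) = r, then E and D are uniquely determined among all completions of rank at most r. -/
open Matrix

/-- Row-submatrix has smaller rank. -/
lemma rank_rowsub_le {k m n : Type*} [Fintype m] [Fintype n] [Fintype k]
    (M : Matrix m n ℝ) (f : k → m) : (M.submatrix f id).rank ≤ M.rank := by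
  have h : M.submatrix f id = M.submatrix f (Equiv.refl n) := rfl
  rw [h, Matrix.rank, Matrix.rank, Matrix.mulVecLin_submatrix, LinearMap.range_comp,
    LinearMap.range_comp]
  have : LinearMap.funLeft ℝ ℝ (Equiv.refl n).symm = LinearMap.id := by
    ext x i; simp [LinearMap.funLeft]
  rw [this, LinearMap.range_id, ← LinearMap.range_eq_map]
  exact Submodule.finrank_map_le (LinearMap.funLeft ℝ ℝ f) (LinearMap.range M.mulVecLin)

/-- Column-submatrix has smaller rank. -/
lemma rank_colsub_le {k m n : Type*} [Fintype m] [Fintype n] [Fintype k]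
    (M : Matrix m n ℝ) (f : k → n) : (M.submatrix id f).rank ≤ M.rank := by
  have h : (M.submatrix id f)ᵀ = Mᵀ.submatrix f id := rfl
  rw [← Matrix.rank_transpose (M.submatrix id f), h, ← Matrix.rank_transpose M]
  exact rank_rowsub_le _ _

/-- If the columns of `B` already span the column space of `[A B]`, then `A = B * W`. -/
lemma exists_mul_eq_left {m n1 n2 : Type*} [Fintype m] [Fintype n1] [Fintype n2]
    [DecidableEq n1] [DecidableEq n2]
    (A : Matrix m n1 ℝ) (B : Matrix m n2 ℝ)
    (h : (fromCols A B).rank ≤ B.rank) : ∃ W : Matrix n2 n1 ℝ, B * W = A := by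
  have hle : LinearMap.range B.mulVecLin ≤ LinearMap.range (fromCols A B).mulVecLin := by
    rintro x ⟨v, rfl⟩
    exact ⟨Sum.elim 0 v, by simp⟩
  have heq : LinearMap.range B.mulVecLin = LinearMap.range (fromCols A B).mulVecLin :=
    Submodule.eq_of_le_of_finrank_le hle h
  have hcol : ∀ j, ∃ w : n2 → ℝ, B *ᵥ w = A *ᵥ Pi.single j 1 := by
    intro j
    have hmem : A *ᵥ Pi.single j 1 ∈ LinearMap.range (fromCols A B).mulVecLin :=
      ⟨Sum.elim (Pi.single j 1) 0, by simp; ext i; rfl⟩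
    rw [← heq] at hmem
    exact hmem
  choose w hw using hcol
  refine ⟨Matrix.of fun k j => w j k, ?_⟩
  ext i j
  have h1 := congrFun (hw j) i
  simp only [Matrix.mulVec, dotProduct, Matrix.mulVec_single, mul_one] at h1
  simpa [Matrix.mul_apply, Pi.single_apply, Finset.sum_ite_eq'] using h1

/-- If the rows of `S` span the row space of `[T; S]`, then `T = X * S`. -/
lemma exists_mul_eq_top {m1 m2 n : Type*} [Fintype m1] [Fintype m2] [Fintype n]
    [DecidableEq m1] [DecidableEq m2]
    (T : Matrix m1 n ℝ) (S : Matrix m2 n ℝ)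
    (h : (fromRows T S).rank ≤ S.rank) : ∃ X : Matrix m1 m2 ℝ, X * S = T := by
  have h' : (fromCols Tᵀ Sᵀ).rank ≤ Sᵀ.rank := by
    rw [← Matrix.transpose_fromRows, Matrix.rank_transpose, Matrix.rank_transpose]
    exact h
  obtain ⟨W, hW⟩ := exists_mul_eq_left Tᵀ Sᵀ h'
  refine ⟨Wᵀ, ?_⟩
  calc Wᵀ * S = (Sᵀ * W)ᵀ := by rw [Matrix.transpose_mul, Matrix.transpose_transpose]
    _ = T := by rw [hW, Matrix.transpose_transpose]

/-- Variant with the known block on top. -/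
lemma exists_mul_eq_bot {m1 m2 n : Type*} [Fintype m1] [Fintype m2] [Fintype n]
    [DecidableEq m1] [DecidableEq m2]
    (T : Matrix m1 n ℝ) (S : Matrix m2 n ℝ)
    (h : (fromRows S T).rank ≤ S.rank) : ∃ X : Matrix m1 m2 ℝ, X * S = T := by
  apply exists_mul_eq_top
  refine le_trans ?_ h
  have hs : (fromRows S T).submatrix (Sum.elim Sum.inr Sum.inl) id = fromRows T S := by
    ext i j; cases i <;> rfl
  rw [← hs]
  exact rank_rowsub_le _ _

lemma fromColumns_inj' {m n1 n2 : Type*} {A A' : Matrix m n1 ℝ} {B B' : Matrix m n2 ℝ}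
    (h : fromCols A B = fromCols A' B') : A = A' ∧ B = B' := by
  constructor <;> ext i j
  · exact congrFun (congrFun h i) (Sum.inl j)
  · exact congrFun (congrFun h i) (Sum.inr j)

/-- Sufficiency: if `rank A = r` and `rank B = r`, the blocks `E` and `D` are uniquely
determined among rank-`≤ r` completions. -/
theorem three_biclique_unique_of_rank {m1 m2 m3 n1 n2 r : ℕ}
    (E : Matrix (Fin m1) (Fin n1) ℝ) (F : Matrix (Fin m1) (Fin n2) ℝ)
    (A : Matrix (Fin m2) (Fin n1) ℝ) (B : Matrix (Fin m2) (Fin n2) ℝ)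
    (C : Matrix (Fin m3) (Fin n1) ℝ) (D : Matrix (Fin m3) (Fin n2) ℝ)
    (hM : (block32 E F A B C D).rank = r) (hA : A.rank = r) (hB : B.rank = r) :
    ∀ (E' : Matrix (Fin m1) (Fin n1) ℝ) (D' : Matrix (Fin m3) (Fin n2) ℝ),
      (block32 E' F A B C D').rank ≤ r → E' = E ∧ D' = D := by
  -- the middle block row of the original matrix
  have hABsub : (block32 E F A B C D).submatrix (Sum.inl ∘ Sum.inr) id = fromCols A B := by
    ext i j
    cases j <;> rfl
  have hABr : (fromCols A B).rank = r := by
    apply le_antisymm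
    · rw [← hABsub, ← hM]; exact rank_rowsub_le _ _
    · rw [← hB]
      have : (fromCols A B).submatrix id Sum.inr = B := rfl
      rw [← this]
      exact rank_colsub_le _ _
  have hBAr : (fromCols B A).rank = r := by
    apply le_antisymm
    · have : (fromCols A B).submatrix id (Sum.elim Sum.inr Sum.inl) = fromCols B A := by
        ext i j; cases j <;> rfl
      rw [← this, ← hABr]
      exact rank_colsub_le _ _
    · rw [← hA]
      have : (fromCols B A).submatrix id Sum.inr = A := rfl
      rw [← this]
      exact rank_colsub_le _ _
  obtain ⟨W, hW⟩ : ∃ W, B * W = A := exists_mul_eq_left A B (by rw [hABr, hB])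
  obtain ⟨V, hV⟩ : ∃ V, A * V = B := exists_mul_eq_left B A (by rw [hBAr, hA])
  -- every rank-≤-r completion has E'' = F * W and D'' = C * V
  have key : ∀ (E'' : Matrix (Fin m1) (Fin n1) ℝ) (D'' : Matrix (Fin m3) (Fin n2) ℝ),
      (block32 E'' F A B C D'').rank ≤ r → E'' = F * W ∧ D'' = C * V := by
    intro E'' D'' h
    constructor
    · -- top two block rows
      have hsub : (block32 E'' F A B C D'').submatrix Sum.inl id
          = fromRows (fromCols E'' F) (fromCols A B) := by
        ext i j
        cases i <;> cases j <;> rfl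
      have hrk : (fromRows (fromCols E'' F) (fromCols A B)).rank ≤ (fromCols A B).rank := by
        rw [hABr, ← hsub]
        exact le_trans (rank_rowsub_le _ _) h
      obtain ⟨X, hX⟩ := exists_mul_eq_top (fromCols E'' F) (fromCols A B) hrk
      rw [Matrix.mul_fromCols] at hX
      obtain ⟨hXA, hXB⟩ := fromColumns_inj' hX
      rw [← hXA, ← hXB, ← hW, ← Matrix.mul_assoc]
    · -- bottom two block rows
      have hsub : (block32 E'' F A B C D'').submatrix (Sum.map Sum.inr id) id
          = fromRows (fromCols A B) (fromCols C D'') := by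
        ext i j
        cases i <;> cases j <;> rfl
      have hrk : (fromRows (fromCols A B) (fromCols C D'')).rank ≤ (fromCols A B).rank := by
        rw [hABr, ← hsub]
        exact le_trans (rank_rowsub_le _ _) h
      obtain ⟨Y, hY⟩ := exists_mul_eq_bot (fromCols C D'') (fromCols A B) hrk
      rw [Matrix.mul_fromCols] at hY
      obtain ⟨hYA, hYB⟩ := fromColumns_inj' hY
      rw [← hYA, ← hYB, ← hV, ← Matrix.mul_assoc]
  intro E' D' hM'
  obtain ⟨hE, hD⟩ := key E D hM.le
  obtain ⟨hE', hD'⟩ := key E' D' hM'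
  exact ⟨hE'.trans hE.symm, hD'.trans hD.symm⟩
end

section
/- Let M = [[F, H, E], [A, G, B], [C, K, D]] be a real matrix of rank r where the blocks A, B, C, E, G are fixed (and F, H, K, D are unknown). Then M is the unique rank-≤-r matrix with those fixed blocks if and only if rank(A) = r and rank(B) = r. -/
open Matrix Submodule Module

section AuxGeneral

variable {m n k : Type*} [Fintype m] [Fintype n] [Fintype k]

set_option linter.unusedSectionVars false

lemma rank_rowSelect_le [DecidableEq m] (M : Matrix m n ℝ) (f : k → m) :
    (M.submatrix f id).rank ≤ M.rank := by
  have h : M.submatrix f id = (Matrix.of fun i j => if f i = j then (1:ℝ) else 0) * M := by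
    ext i j
    simp [Matrix.mul_apply]
  rw [h]
  exact Matrix.rank_mul_le_right _ _

lemma rank_colSelect_le [DecidableEq n] (M : Matrix m n ℝ) (g : k → n) :
    (M.submatrix id g).rank ≤ M.rank := by
  have h : M.submatrix id g = M * (Matrix.of fun i j => if i = g j then (1:ℝ) else 0) := by
    ext i j
    simp [Matrix.mul_apply]
  rw [h]
  exact Matrix.rank_mul_le_left _ _

lemma rank_eq_finrank_span_rows (M : Matrix m n ℝ) :
    M.rank = finrank ℝ (span ℝ (Set.range M)) := by
  rw [← Matrix.rank_transpose, Matrix.rank_eq_finrank_span_cols, Matrix.col_transpose]; rfl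

lemma row_factor (M : Matrix m n ℝ) (f : k → m)
    (h : M.rank ≤ (M.submatrix f id).rank) :
    ∃ X : Matrix m k ℝ, M = X * M.submatrix f id := by
  set P := M.submatrix f id with hP
  have hle : span ℝ (Set.range P) ≤ span ℝ (Set.range M) := by
    apply span_le.2
    rintro _ ⟨i, rfl⟩
    exact subset_span ⟨f i, rfl⟩
  have heq : span ℝ (Set.range P) = span ℝ (Set.range M) := by
    apply Submodule.eq_of_le_of_finrank_le hle
    rw [← rank_eq_finrank_span_rows, ← rank_eq_finrank_span_rows]
    exact h
  have hmem : ∀ i, M i ∈ span ℝ (Set.range P) := by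
    intro i; rw [heq]; exact subset_span ⟨i, rfl⟩
  choose c hc using fun i => (mem_span_range_iff_exists_fun ℝ).1 (hmem i)
  refine ⟨Matrix.of c, ?_⟩
  ext i j
  rw [Matrix.mul_apply]
  have := congrFun (hc i) j
  simpa [Finset.sum_apply] using this.symm

lemma finrank_ker_mulVecLin (M : Matrix m n ℝ) :
    finrank ℝ (LinearMap.ker M.mulVecLin) = Fintype.card n - M.rank := by
  have h := LinearMap.finrank_range_add_finrank_ker M.mulVecLin
  rw [Module.finrank_fintype_fun_eq_card] at h
  have : M.rank = finrank ℝ (LinearMap.range M.mulVecLin) := rfl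
  omega

lemma ker_mono (M : Matrix m n ℝ) (f : k → m) :
    LinearMap.ker M.mulVecLin ≤ LinearMap.ker (M.submatrix f id).mulVecLin := by
  intro z hz
  simp only [LinearMap.mem_ker, Matrix.mulVecLin_apply] at *
  ext i
  have := congrFun hz (f i)
  simpa [Matrix.mulVec, dotProduct] using this

/-- If a row-selection has strictly smaller rank, some kernel vector of the
selection is not in the kernel of the full matrix. -/
lemma exists_kernel_vec (M : Matrix m n ℝ) (f : k → m)
    (h : (M.submatrix f id).rank < M.rank) :
    ∃ z, (M.submatrix f id) *ᵥ z = 0 ∧ M *ᵥ z ≠ 0 := by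
  by_contra hcon
  push_neg at hcon
  have hle : LinearMap.ker (M.submatrix f id).mulVecLin ≤ LinearMap.ker M.mulVecLin := by
    intro z hz
    simp only [LinearMap.mem_ker, Matrix.mulVecLin_apply] at *
    by_contra hz2
    exact hz2 (hcon z hz)
  have heq : LinearMap.ker (M.submatrix f id).mulVecLin = LinearMap.ker M.mulVecLin :=
    le_antisymm hle (ker_mono M f)
  have h1 := finrank_ker_mulVecLin M
  have h2 := finrank_ker_mulVecLin (M.submatrix f id)
  have hc1 : M.rank ≤ Fintype.card n := Matrix.rank_le_card_width M
  have hc2 : (M.submatrix f id).rank ≤ Fintype.card n := Matrix.rank_le_card_width _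
  rw [heq] at h2
  omega

lemma transpose_colSelect (P : Matrix m n ℝ) (g : k → n) :
    Pᵀ.submatrix g id = (P.submatrix id g)ᵀ := by
  ext i j; simp

lemma leftker_subset (P : Matrix m n ℝ) (g : k → n)
    (h : P.rank ≤ (P.submatrix id g).rank) {v : m → ℝ}
    (hv : v ᵥ* P.submatrix id g = 0) : v ᵥ* P = 0 := by
  have hle := ker_mono Pᵀ g
  have heq : LinearMap.ker Pᵀ.mulVecLin = LinearMap.ker (Pᵀ.submatrix g id).mulVecLin := by
    apply Submodule.eq_of_le_of_finrank_le hle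
    have h1 := finrank_ker_mulVecLin Pᵀ
    have h2 := finrank_ker_mulVecLin (Pᵀ.submatrix g id)
    have hr1 : Pᵀ.rank = P.rank := Matrix.rank_transpose P
    have hr2 : (Pᵀ.submatrix g id).rank = (P.submatrix id g).rank := by
      rw [transpose_colSelect, Matrix.rank_transpose]
    have hc1 : Pᵀ.rank ≤ Fintype.card m := Matrix.rank_le_card_width _
    have hc2 : (Pᵀ.submatrix g id).rank ≤ Fintype.card m := Matrix.rank_le_card_width _
    omega
  have hv' : v ∈ LinearMap.ker (Pᵀ.submatrix g id).mulVecLin := by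
    simp only [LinearMap.mem_ker, Matrix.mulVecLin_apply]
    rw [transpose_colSelect, Matrix.mulVec_transpose]
    exact hv
  rw [← heq] at hv'
  simp only [LinearMap.mem_ker, Matrix.mulVecLin_apply, Matrix.mulVec_transpose] at hv'
  exact hv'

lemma exists_leftker_vec (P : Matrix m n ℝ) (g : k → n)
    (h : (P.submatrix id g).rank < P.rank) :
    ∃ v, v ᵥ* P.submatrix id g = 0 ∧ v ᵥ* P ≠ 0 := by
  have h' : (Pᵀ.submatrix g id).rank < Pᵀ.rank := by
    rw [transpose_colSelect, Matrix.rank_transpose, Matrix.rank_transpose]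
    exact h
  obtain ⟨v, hv1, hv2⟩ := exists_kernel_vec Pᵀ g h'
  refine ⟨v, ?_, ?_⟩
  · rw [transpose_colSelect, Matrix.mulVec_transpose] at hv1; exact hv1
  · rw [Matrix.mulVec_transpose] at hv2; exact hv2

lemma vecMul_colSelect (P : Matrix m n ℝ) (g : k → n) (v : m → ℝ) (j : k) :
    (v ᵥ* P.submatrix id g) j = (v ᵥ* P) (g j) := by
  simp [Matrix.vecMul, dotProduct]

lemma mulVec_rowSelect (M : Matrix m n ℝ) (f : k → m) (z : n → ℝ) (i : k) :
    ((M.submatrix f id) *ᵥ z) i = (M *ᵥ z) (f i) := by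
  simp [Matrix.mulVec, dotProduct]

lemma mul_vecMulVec'_s11 (M : Matrix m n ℝ) (z : n → ℝ) (w : k → ℝ) :
    M * Matrix.vecMulVec z w = Matrix.of fun i j => (M *ᵥ z) i * w j := by
  ext i j
  simp [Matrix.mul_apply, Matrix.vecMulVec_apply, Matrix.mulVec, dotProduct,
    Finset.sum_mul, mul_assoc]

lemma vecMulVec_mul'_s11 (u : m → ℝ) (v : n → ℝ) (M : Matrix n k ℝ) :
    Matrix.vecMulVec u v * M = Matrix.of fun i j => u i * (v ᵥ* M) j := by
  ext i j
  simp [Matrix.mul_apply, Matrix.vecMulVec_apply, Matrix.vecMul, dotProduct,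
    Finset.mul_sum, mul_assoc]

end AuxGeneral

section Main

variable {m1 m2 m3 n1 n2 n3 : ℕ}

/-- The middle block-row of a `block3`. -/
def midRow3 (A : Matrix (Fin m2) (Fin n1) ℝ) (G : Matrix (Fin m2) (Fin n2) ℝ)
    (B : Matrix (Fin m2) (Fin n3) ℝ) :
    Matrix (Fin m2) ((Fin n1 ⊕ Fin n2) ⊕ Fin n3) ℝ :=
  Matrix.of fun i => Sum.elim (Sum.elim (A i) (G i)) (B i)

lemma block3_submatrix_mid
    (F : Matrix (Fin m1) (Fin n1) ℝ) (H : Matrix (Fin m1) (Fin n2) ℝ)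
    (E : Matrix (Fin m1) (Fin n3) ℝ)
    (A : Matrix (Fin m2) (Fin n1) ℝ) (G : Matrix (Fin m2) (Fin n2) ℝ)
    (B : Matrix (Fin m2) (Fin n3) ℝ)
    (C : Matrix (Fin m3) (Fin n1) ℝ) (K : Matrix (Fin m3) (Fin n2) ℝ)
    (D : Matrix (Fin m3) (Fin n3) ℝ) :
    (block3 F H E A G B C K D).submatrix (fun i => Sum.inl (Sum.inr i)) id
      = midRow3 A G B := by
  ext i j
  rcases j with (j | j) | j <;> simp [block3, midRow3]

lemma midRow3_submatrix_A (A : Matrix (Fin m2) (Fin n1) ℝ) (G : Matrix (Fin m2) (Fin n2) ℝ)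
    (B : Matrix (Fin m2) (Fin n3) ℝ) :
    (midRow3 A G B).submatrix id (fun j => Sum.inl (Sum.inl j)) = A := by
  ext i j; simp [midRow3]

lemma midRow3_submatrix_B (A : Matrix (Fin m2) (Fin n1) ℝ) (G : Matrix (Fin m2) (Fin n2) ℝ)
    (B : Matrix (Fin m2) (Fin n3) ℝ) :
    (midRow3 A G B).submatrix id Sum.inr = B := by
  ext i j; simp [midRow3]

end Main
/-- For `M = [[F,H,E],[A,G,B],[C,K,D]]` of rank `r` with `A, B, C, E, G` fixed and
`F, H, K, D` unknown, the completion is unique iff `rank A = r` and `rank B = r`. -/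
theorem three_by_three_unique_iff {m1 m2 m3 n1 n2 n3 r : ℕ}
    (hm1 : 0 < m1) (hm2 : 0 < m2) (hm3 : 0 < m3)
    (hn1 : 0 < n1) (hn2 : 0 < n2) (hn3 : 0 < n3) (hr : 1 ≤ r)
    (F : Matrix (Fin m1) (Fin n1) ℝ) (H : Matrix (Fin m1) (Fin n2) ℝ)
    (E : Matrix (Fin m1) (Fin n3) ℝ)
    (A : Matrix (Fin m2) (Fin n1) ℝ) (G : Matrix (Fin m2) (Fin n2) ℝ)
    (B : Matrix (Fin m2) (Fin n3) ℝ)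
    (C : Matrix (Fin m3) (Fin n1) ℝ) (K : Matrix (Fin m3) (Fin n2) ℝ)
    (D : Matrix (Fin m3) (Fin n3) ℝ)
    (hM : (block3 F H E A G B C K D).rank = r) :
    (∀ (F' : Matrix (Fin m1) (Fin n1) ℝ) (H' : Matrix (Fin m1) (Fin n2) ℝ)
        (K' : Matrix (Fin m3) (Fin n2) ℝ) (D' : Matrix (Fin m3) (Fin n3) ℝ),
        (block3 F' H' E A G B C K' D').rank ≤ r →
          F' = F ∧ H' = H ∧ K' = K ∧ D' = D) ↔
      A.rank = r ∧ B.rank = r := by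
  set M := block3 F H E A G B C K D with hMdef
  set Pm := midRow3 A G B with hPmdef
  have hPmM : ∀ (F' : Matrix (Fin m1) (Fin n1) ℝ) (H' : Matrix (Fin m1) (Fin n2) ℝ)
      (K' : Matrix (Fin m3) (Fin n2) ℝ) (D' : Matrix (Fin m3) (Fin n3) ℝ),
      Pm.rank ≤ (block3 F' H' E A G B C K' D').rank := by
    intro F' H' K' D'
    rw [hPmdef, ← block3_submatrix_mid F' H' E A G B C K' D']
    exact rank_rowSelect_le _ _
  have hAPm : A.rank ≤ Pm.rank := by
    conv_lhs => rw [← midRow3_submatrix_A A G B]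
    exact rank_colSelect_le _ _
  have hBPm : B.rank ≤ Pm.rank := by
    conv_lhs => rw [← midRow3_submatrix_B A G B]
    exact rank_colSelect_le _ _
  have hPmr : Pm.rank ≤ r := hM ▸ hPmM F H K D
  constructor
  · intro huniq
    have hPmM_pt : ∀ i j, Pm i j = M (Sum.inl (Sum.inr i)) j := by
      intro i j
      rw [hPmdef, ← block3_submatrix_mid F H E A G B C K D]
      rfl
    -- Step 1 : the middle block row has full rank r
    have hPr : Pm.rank = r := by
      by_contra hne
      have hlt : (M.submatrix (fun i => Sum.inl (Sum.inr i)) id).rank < M.rank := by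
        rw [block3_submatrix_mid F H E A G B C K D, hM]
        exact lt_of_le_of_ne hPmr hne
      obtain ⟨z, hz0, hz⟩ := exists_kernel_vec M (fun i => Sum.inl (Sum.inr i)) hlt
      have hcmid : ∀ i, (M *ᵥ z) (Sum.inl (Sum.inr i)) = 0 := by
        intro i
        have h := mulVec_rowSelect M (fun i => Sum.inl (Sum.inr i)) z i
        rw [hz0] at h
        simpa using h.symm
      have hcmid' : ∀ i, (fromBlocks (fromBlocks F H A G) (E.fromRows B)
          (C.fromCols K) D *ᵥ z) (Sum.inl (Sum.inr i)) = 0 := by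
        intro i
        have h := hcmid i
        rw [hMdef] at h
        simpa [block3] using h
      set e2 : Fin n2 := ⟨0, hn2⟩ with he2
      have hblock : block3 F
          (Matrix.of fun i j => H i j +
            (M *ᵥ z) (Sum.inl (Sum.inl i)) * (if j = e2 then (1:ℝ) else 0)) E A G B C
          (Matrix.of fun i j => K i j +
            (M *ᵥ z) (Sum.inr i) * (if j = e2 then (1:ℝ) else 0)) D
          = M * (1 + Matrix.vecMulVec z
              (fun j => if j = Sum.inl (Sum.inr e2) then (1:ℝ) else 0)) := by
        rw [Matrix.mul_add, Matrix.mul_one, mul_vecMulVec'_s11]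
        ext i j
        rcases i with (i | i) | i <;> rcases j with (j | j) | j <;>
          simp [hMdef, block3, Matrix.add_apply, hcmid']
      have hrank : (block3 F
          (Matrix.of fun i j => H i j +
            (M *ᵥ z) (Sum.inl (Sum.inl i)) * (if j = e2 then (1:ℝ) else 0)) E A G B C
          (Matrix.of fun i j => K i j +
            (M *ᵥ z) (Sum.inr i) * (if j = e2 then (1:ℝ) else 0)) D).rank ≤ r := by
        rw [hblock, ← hM]
        exact Matrix.rank_mul_le_left _ _
      obtain ⟨-, hH, hK, -⟩ := huniq _ _ _ _ hrank
      apply hz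
      ext i
      rcases i with (i | i) | i
      · have := congrFun (congrFun hH i) e2
        simpa using this
      · simpa using hcmid i
      · have := congrFun (congrFun hK i) e2
        simpa using this
    -- Step 2 : rank A = r
    have hAr : A.rank = r := by
      by_contra hne
      have hAle : A.rank ≤ r := le_trans hAPm (le_of_eq hPr)
      have hAlt : A.rank < Pm.rank := by rw [hPr]; exact lt_of_le_of_ne hAle hne
      have hlt : (Pm.submatrix id
          (fun j : Fin n1 => Sum.inl (Sum.inl j))).rank < Pm.rank := by
        have hs : Pm.submatrix id (fun j : Fin n1 => Sum.inl (Sum.inl j)) = A := by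
          rw [hPmdef]; exact midRow3_submatrix_A A G B
        rw [hs]; exact hAlt
      obtain ⟨v, hv0, hv⟩ := exists_leftker_vec Pm _ hlt
      have hw1 : ∀ j, (v ᵥ* Pm) (Sum.inl (Sum.inl j)) = 0 := by
        intro j
        have h := vecMul_colSelect Pm (fun j : Fin n1 => Sum.inl (Sum.inl j)) v j
        rw [hv0] at h
        simpa using h.symm
      set e3 : Fin m3 := ⟨0, hm3⟩ with he3
      have hv'M : (Sum.elim (Sum.elim (0 : Fin m1 → ℝ) v) (0 : Fin m3 → ℝ)) ᵥ* M
          = v ᵥ* Pm := by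
        ext j
        simp [Matrix.vecMul, dotProduct, Fintype.sum_sum_type, hPmM_pt]
      have hblock : block3 F H E A G B C
          (Matrix.of fun i j => K i j +
            (if i = e3 then (1:ℝ) else 0) * (v ᵥ* Pm) (Sum.inl (Sum.inr j)))
          (Matrix.of fun i j => D i j +
            (if i = e3 then (1:ℝ) else 0) * (v ᵥ* Pm) (Sum.inr j))
          = (1 + Matrix.vecMulVec
              (fun i => if i = Sum.inr e3 then (1:ℝ) else 0)
              (Sum.elim (Sum.elim (0 : Fin m1 → ℝ) v) (0 : Fin m3 → ℝ))) * M := by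
        rw [Matrix.add_mul, Matrix.one_mul, vecMulVec_mul'_s11, hv'M]
        ext i j
        rcases i with (i | i) | i <;> rcases j with (j | j) | j <;>
          simp [hMdef, block3, Matrix.add_apply, hw1]
      have hrank : (block3 F H E A G B C
          (Matrix.of fun i j => K i j +
            (if i = e3 then (1:ℝ) else 0) * (v ᵥ* Pm) (Sum.inl (Sum.inr j)))
          (Matrix.of fun i j => D i j +
            (if i = e3 then (1:ℝ) else 0) * (v ᵥ* Pm) (Sum.inr j))).rank ≤ r := by
        rw [hblock, ← hM]
        exact Matrix.rank_mul_le_right _ _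
      obtain ⟨-, -, hK, hD⟩ := huniq _ _ _ _ hrank
      apply hv
      ext j
      rcases j with (j | j) | j
      · exact hw1 j
      · have := congrFun (congrFun hK e3) j
        simpa using this
      · have := congrFun (congrFun hD e3) j
        simpa using this
    -- Step 3 : rank B = r
    have hBr : B.rank = r := by
      by_contra hne
      have hBle : B.rank ≤ r := le_trans hBPm (le_of_eq hPr)
      have hBlt : B.rank < Pm.rank := by rw [hPr]; exact lt_of_le_of_ne hBle hne
      have hlt : (Pm.submatrix id
          (Sum.inr : Fin n3 → (Fin n1 ⊕ Fin n2) ⊕ Fin n3)).rank < Pm.rank := by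
        have hs : Pm.submatrix id (Sum.inr : Fin n3 → (Fin n1 ⊕ Fin n2) ⊕ Fin n3) = B := by
          rw [hPmdef]; exact midRow3_submatrix_B A G B
        rw [hs]; exact hBlt
      obtain ⟨v, hv0, hv⟩ := exists_leftker_vec Pm _ hlt
      have hw3 : ∀ j, (v ᵥ* Pm) (Sum.inr j) = 0 := by
        intro j
        have h := vecMul_colSelect Pm (Sum.inr : Fin n3 → (Fin n1 ⊕ Fin n2) ⊕ Fin n3) v j
        rw [hv0] at h
        simpa using h.symm
      set e1 : Fin m1 := ⟨0, hm1⟩ with he1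
      have hv'M : (Sum.elim (Sum.elim (0 : Fin m1 → ℝ) v) (0 : Fin m3 → ℝ)) ᵥ* M
          = v ᵥ* Pm := by
        ext j
        simp [Matrix.vecMul, dotProduct, Fintype.sum_sum_type, hPmM_pt]
      have hblock : block3
          (Matrix.of fun i j => F i j +
            (if i = e1 then (1:ℝ) else 0) * (v ᵥ* Pm) (Sum.inl (Sum.inl j)))
          (Matrix.of fun i j => H i j +
            (if i = e1 then (1:ℝ) else 0) * (v ᵥ* Pm) (Sum.inl (Sum.inr j)))
          E A G B C K D
          = (1 + Matrix.vecMulVec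
              (fun i => if i = Sum.inl (Sum.inl e1) then (1:ℝ) else 0)
              (Sum.elim (Sum.elim (0 : Fin m1 → ℝ) v) (0 : Fin m3 → ℝ))) * M := by
        rw [Matrix.add_mul, Matrix.one_mul, vecMulVec_mul'_s11, hv'M]
        ext i j
        rcases i with (i | i) | i <;> rcases j with (j | j) | j <;>
          simp [hMdef, block3, Matrix.add_apply, hw3]
      have hrank : (block3
          (Matrix.of fun i j => F i j +
            (if i = e1 then (1:ℝ) else 0) * (v ᵥ* Pm) (Sum.inl (Sum.inl j)))
          (Matrix.of fun i j => H i j +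
            (if i = e1 then (1:ℝ) else 0) * (v ᵥ* Pm) (Sum.inl (Sum.inr j)))
          E A G B C K D).rank ≤ r := by
        rw [hblock, ← hM]
        exact Matrix.rank_mul_le_right _ _
      obtain ⟨hF, hH, -, -⟩ := huniq _ _ _ _ hrank
      apply hv
      ext j
      rcases j with (j | j) | j
      · have := congrFun (congrFun hF e1) j
        simpa using this
      · have := congrFun (congrFun hH e1) j
        simpa using this
      · exact hw3 j
    exact ⟨hAr, hBr⟩
  · rintro ⟨hAr, hBr⟩ F' H' K' D' hle
    set M' := block3 F' H' E A G B C K' D' with hM'def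
    have hPr : Pm.rank = r := le_antisymm hPmr (hAr ▸ hAPm)
    -- factor both M and M' through Pm
    have hfac : ∀ (F' : Matrix (Fin m1) (Fin n1) ℝ) (H' : Matrix (Fin m1) (Fin n2) ℝ)
        (K' : Matrix (Fin m3) (Fin n2) ℝ) (D' : Matrix (Fin m3) (Fin n3) ℝ),
        (block3 F' H' E A G B C K' D').rank ≤ r →
        ∃ X : Matrix ((Fin m1 ⊕ Fin m2) ⊕ Fin m3) (Fin m2) ℝ,
          ∀ ii, block3 F' H' E A G B C K' D' ii = (X ii) ᵥ* Pm := by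
      intro F'' H'' K'' D'' h''
      obtain ⟨X, hX⟩ := row_factor (block3 F'' H'' E A G B C K'' D'')
        (fun i => Sum.inl (Sum.inr i)) (by
          rw [block3_submatrix_mid F'' H'' E A G B C K'' D'', hPr]; exact h'')
      refine ⟨X, fun ii => ?_⟩
      rw [block3_submatrix_mid F'' H'' E A G B C K'' D''] at hX
      ext jj
      rw [hX]
      simp [Matrix.mul_apply, Matrix.vecMul, dotProduct, hPmdef]
    obtain ⟨X, hX⟩ := hfac F H K D (le_of_eq hM)
    obtain ⟨X', hX'⟩ := hfac F' H' K' D' hle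
    -- top rows agree
    have htop : ∀ i, M' (Sum.inl (Sum.inl i)) = M (Sum.inl (Sum.inl i)) := by
      intro i
      have hsub : Pm.rank ≤ (Pm.submatrix id (Sum.inr :
          Fin n3 → (Fin n1 ⊕ Fin n2) ⊕ Fin n3)).rank := by
        rw [midRow3_submatrix_B, hPr, hBr]
      have h0 : (X' (Sum.inl (Sum.inl i)) - X (Sum.inl (Sum.inl i))) ᵥ*
          Pm.submatrix id (Sum.inr : Fin n3 → (Fin n1 ⊕ Fin n2) ⊕ Fin n3) = 0 := by
        ext j
        rw [vecMul_colSelect, Matrix.sub_vecMul]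
        have h1 : (X' (Sum.inl (Sum.inl i)) ᵥ* Pm) (Sum.inr j) = E i j := by
          rw [← hX']; simp [hM'def, block3]
        have h2 : (X (Sum.inl (Sum.inl i)) ᵥ* Pm) (Sum.inr j) = E i j := by
          rw [← hX]; simp [hMdef, block3]
        simp [h1, h2]
      have := leftker_subset Pm _ hsub h0
      rw [Matrix.sub_vecMul, sub_eq_zero] at this
      rw [hM'def, hMdef, hX', hX, this]
    have hbot : ∀ i, M' (Sum.inr i) = M (Sum.inr i) := by
      intro i
      have hsub : Pm.rank ≤ (Pm.submatrix id (fun j => Sum.inl (Sum.inl j) :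
          Fin n1 → (Fin n1 ⊕ Fin n2) ⊕ Fin n3)).rank := by
        rw [midRow3_submatrix_A, hPr, hAr]
      have h0 : (X' (Sum.inr i) - X (Sum.inr i)) ᵥ*
          Pm.submatrix id (fun j => Sum.inl (Sum.inl j) :
            Fin n1 → (Fin n1 ⊕ Fin n2) ⊕ Fin n3) = 0 := by
        ext j
        rw [vecMul_colSelect, Matrix.sub_vecMul]
        have h1 : (X' (Sum.inr i) ᵥ* Pm) (Sum.inl (Sum.inl j)) = C i j := by
          rw [← hX']; simp [hM'def, block3]
        have h2 : (X (Sum.inr i) ᵥ* Pm) (Sum.inl (Sum.inl j)) = C i j := by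
          rw [← hX]; simp [hMdef, block3]
        simp [h1, h2]
      have := leftker_subset Pm _ hsub h0
      rw [Matrix.sub_vecMul, sub_eq_zero] at this
      rw [hM'def, hMdef, hX', hX, this]
    refine ⟨?_, ?_, ?_, ?_⟩
    · ext i j
      have := congrFun (htop i) (Sum.inl (Sum.inl j))
      simpa [hM'def, hMdef, block3] using this
    · ext i j
      have := congrFun (htop i) (Sum.inl (Sum.inr j))
      simpa [hM'def, hMdef, block3] using this
    · ext i j
      have := congrFun (hbot i) (Sum.inl (Sum.inr j))
      simpa [hM'def, hMdef, block3] using this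
    · ext i j
      have := congrFun (hbot i) (Sum.inr j)
      simpa [hM'def, hMdef, block3] using this
end

section
/- Let M = [[F, H, E], [A, G, B], [C, K, D]] be a real matrix of rank r where the blocks F, A, G, K, D are fixed (staircase pattern) and H, E, B, C are unknown. Then M is the unique rank-≤-r matrix with those fixed blocks if and only if rank(A) = r, rank(G) = r, and rank(K) = r. -/
open Matrix

set_option linter.unusedSectionVars false
set_option maxHeartbeats 2000000

section Aux

open Module

variable {l m n o p q : Type*} [Fintype l] [Fintype m] [Fintype n] [Fintype o] [Fintype p]
  [Fintype q]

lemma aux_rank_submatrix_le [DecidableEq m] [DecidableEq n]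
    (A : Matrix m n ℝ) (f : o → m) (g : p → n) :
    (A.submatrix f g).rank ≤ A.rank := by
  have h1 : A.submatrix f (id : n → n) =
      (Matrix.of fun i k => if k = f i then (1:ℝ) else 0 : Matrix o m ℝ) * A := by
    ext i j
    simp [Matrix.mul_apply, ite_mul]
  have h2 : A.submatrix f g =
      (A.submatrix f (id : n → n)) *
        (Matrix.of fun k j => if k = g j then (1:ℝ) else 0 : Matrix n p ℝ) := by
    ext i j
    simp [Matrix.mul_apply, mul_ite]
  calc (A.submatrix f g).rank
      ≤ (A.submatrix f (id : n → n)).rank := by rw [h2]; exact Matrix.rank_mul_le_left _ _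
    _ ≤ A.rank := by rw [h1]; exact Matrix.rank_mul_le_right _ _

lemma aux_col_factor {A : Matrix m n ℝ} {B : Matrix m p ℝ}
    (h : LinearMap.range B.mulVecLin ≤ LinearMap.range A.mulVecLin) :
    ∃ X : Matrix n p ℝ, B = A * X := by
  classical
  have hcol : ∀ j, ∃ v, A *ᵥ v = fun i => B i j := by
    intro j
    have hmem : (fun i => B i j) ∈ LinearMap.range B.mulVecLin := by
      refine ⟨Pi.single j 1, ?_⟩
      ext i
      simp [Matrix.mulVecLin_apply, Matrix.mulVec, dotProduct, Pi.single_apply, mul_ite]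
    exact h hmem
  refine ⟨Matrix.of fun k j => Classical.choose (hcol j) k, ?_⟩
  ext i j
  have := congrFun (Classical.choose_spec (hcol j)) i
  simpa [Matrix.mul_apply, Matrix.mulVec, dotProduct] using this.symm

lemma aux_range_fromCols (A : Matrix m n ℝ) (B : Matrix m p ℝ) :
    LinearMap.range (Matrix.fromCols A B).mulVecLin =
      LinearMap.range A.mulVecLin ⊔ LinearMap.range B.mulVecLin := by
  apply le_antisymm
  · rintro x ⟨v, rfl⟩
    have hv : v = Sum.elim (v ∘ Sum.inl) (v ∘ Sum.inr) := by
      funext k; cases k <;> rfl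
    rw [Matrix.mulVecLin_apply, hv, Matrix.fromCols_mulVec_sumElim]
    exact Submodule.add_mem _ (Submodule.mem_sup_left ⟨_, rfl⟩) (Submodule.mem_sup_right ⟨_, rfl⟩)
  · apply sup_le
    · rintro x ⟨v, rfl⟩
      refine ⟨Sum.elim v 0, ?_⟩
      simp [Matrix.mulVecLin_apply, Matrix.fromCols_mulVec_sumElim]
    · rintro x ⟨v, rfl⟩
      refine ⟨Sum.elim 0 v, ?_⟩
      simp [Matrix.mulVecLin_apply, Matrix.fromCols_mulVec_sumElim]

lemma aux_factor_of_rank_le {W : Matrix m q ℝ} {R : Matrix m n ℝ} {P : Matrix m p ℝ}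
    (hR : LinearMap.range R.mulVecLin ≤ LinearMap.range W.mulVecLin)
    (hP : LinearMap.range P.mulVecLin ≤ LinearMap.range W.mulVecLin)
    (h : W.rank ≤ R.rank) :
    ∃ X : Matrix n p ℝ, P = R * X := by
  have heq : LinearMap.range R.mulVecLin = LinearMap.range W.mulVecLin :=
    Submodule.eq_of_le_of_finrank_le hR h
  exact aux_col_factor (heq ▸ hP)

lemma aux_exists_col_factor {P : Matrix m p ℝ} {R : Matrix m n ℝ}
    (h : (Matrix.fromCols P R).rank ≤ R.rank) :
    ∃ X : Matrix n p ℝ, P = R * X := by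
  refine aux_factor_of_rank_le ?_ ?_ h <;> rw [aux_range_fromCols]
  · exact le_sup_right
  · exact le_sup_left

lemma aux_exists_col_factor' {P : Matrix m p ℝ} {R : Matrix m n ℝ}
    (h : (Matrix.fromCols R P).rank ≤ R.rank) :
    ∃ X : Matrix n p ℝ, P = R * X := by
  refine aux_factor_of_rank_le ?_ ?_ h <;> rw [aux_range_fromCols]
  · exact le_sup_left
  · exact le_sup_right

lemma aux_exists_row_factor {P : Matrix p n ℝ} {R : Matrix m n ℝ}
    (h : (Matrix.fromRows P R).rank ≤ R.rank) :
    ∃ Y : Matrix p m ℝ, P = Y * R := by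
  have h' : (Matrix.fromCols Pᵀ Rᵀ).rank ≤ Rᵀ.rank := by
    rw [← Matrix.transpose_fromRows, Matrix.rank_transpose, Matrix.rank_transpose]
    exact h
  obtain ⟨X, hX⟩ := aux_exists_col_factor h'
  refine ⟨Xᵀ, ?_⟩
  have := congrArg Matrix.transpose hX
  simpa [Matrix.transpose_mul] using this

lemma aux_fromBlocks_eq (P : Matrix m n ℝ) (Q : Matrix m p ℝ) (R : Matrix o n ℝ)
    (S : Matrix o p ℝ) :
    Matrix.fromBlocks P Q R S = Matrix.fromCols (Matrix.fromRows P R) (Matrix.fromRows Q S) := by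
  ext i j
  cases i <;> cases j <;> rfl

lemma aux_L1 {P : Matrix m n ℝ} {Q : Matrix m p ℝ} {R : Matrix o n ℝ} {S : Matrix o p ℝ}
    (hrk : (Matrix.fromBlocks P Q R S).rank ≤ R.rank) :
    ∃ X : Matrix n p ℝ, Q = P * X ∧ S = R * X := by
  classical
  have hRle : R.rank ≤ (Matrix.fromRows P R).rank := by
    have hsub : R = (Matrix.fromRows P R).submatrix Sum.inr (id : n → n) := by
      ext i j; rfl
    rw [hsub]
    exact aux_rank_submatrix_le _ _ _
  have h : (Matrix.fromCols (Matrix.fromRows P R) (Matrix.fromRows Q S)).rank ≤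
      (Matrix.fromRows P R).rank := by
    rw [← aux_fromBlocks_eq]
    exact hrk.trans hRle
  obtain ⟨X, hX⟩ :=
    aux_exists_col_factor' (P := Matrix.fromRows Q S) (R := Matrix.fromRows P R) h
  rw [Matrix.fromRows_mul] at hX
  refine ⟨X, ?_, ?_⟩
  · ext i j; exact congrFun (congrFun hX (Sum.inl i)) j
  · ext i j; exact congrFun (congrFun hX (Sum.inr i)) j

lemma aux_L1' {P : Matrix m n ℝ} {Q : Matrix m p ℝ} {R : Matrix o n ℝ} {S : Matrix o p ℝ}
    (hrk : (Matrix.fromBlocks P Q R S).rank ≤ R.rank)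
    (Y : Matrix m o ℝ) (hY : Y * R = P) : Q = Y * S := by
  obtain ⟨X, hQ, hS⟩ := aux_L1 hrk
  calc Q = P * X := hQ
    _ = Y * R * X := by rw [hY]
    _ = Y * (R * X) := Matrix.mul_assoc _ _ _
    _ = Y * S := by rw [← hS]

lemma aux_L2' {P : Matrix m n ℝ} {Q : Matrix m p ℝ} {R : Matrix o n ℝ} {S : Matrix o p ℝ}
    (hrk : (Matrix.fromBlocks P Q R S).rank ≤ Q.rank)
    (X : Matrix p n ℝ) (hX : Q * X = P) : R = S * X := by
  have hrkT : (Matrix.fromBlocks Pᵀ Rᵀ Qᵀ Sᵀ).rank ≤ Qᵀ.rank := by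
    rw [← Matrix.fromBlocks_transpose, Matrix.rank_transpose, Matrix.rank_transpose]
    exact hrk
  have h1 := aux_L1' hrkT Xᵀ (by rw [← Matrix.transpose_mul, hX])
  have h2 := congrArg Matrix.transpose h1
  simpa [Matrix.transpose_mul] using h2

lemma aux_full_col_rank_mulVec {r : ℕ} {A : Matrix m (Fin r) ℝ} (h : A.rank = r)
    {x : Fin r → ℝ} (hx : A *ᵥ x = 0) : x = 0 := by
  have hker : LinearMap.ker A.mulVecLin = ⊥ := by
    have hrn := LinearMap.finrank_range_add_finrank_ker A.mulVecLin
    rw [show finrank ℝ (LinearMap.range A.mulVecLin) = r from h] at hrn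
    simp only [Module.finrank_pi, Fintype.card_fin] at hrn
    have h0 : finrank ℝ (LinearMap.ker A.mulVecLin) = 0 := by omega
    exact Submodule.finrank_eq_zero.mp h0
  have hmem : x ∈ LinearMap.ker A.mulVecLin := by simpa [Matrix.mulVecLin_apply] using hx
  simpa [hker] using hmem

lemma aux_exists_mulVec_zero {r : ℕ} {A : Matrix m (Fin r) ℝ} (h : A.rank < r) :
    ∃ x ≠ 0, A *ᵥ x = 0 := by
  have hker : LinearMap.ker A.mulVecLin ≠ ⊥ := by
    intro hbot
    have hrn := LinearMap.finrank_range_add_finrank_ker A.mulVecLin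
    rw [hbot] at hrn
    simp only [Module.finrank_pi, Fintype.card_fin, finrank_bot, add_zero] at hrn
    rw [Matrix.rank] at h
    omega
  obtain ⟨x, hx, hxne⟩ := (Submodule.ne_bot_iff _).mp hker
  exact ⟨x, hxne, by simpa [Matrix.mulVecLin_apply] using hx⟩

lemma aux_full_row_rank_vecMul {r : ℕ} {Q : Matrix (Fin r) n ℝ} (h : Q.rank = r)
    {x : Fin r → ℝ} (hx : x ᵥ* Q = 0) : x = 0 := by
  refine aux_full_col_rank_mulVec (A := Qᵀ) ?_ ?_
  · rw [Matrix.rank_transpose]; exact h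
  · rw [Matrix.mulVec_transpose]; exact hx

lemma aux_exists_vecMul_zero {r : ℕ} {Q : Matrix (Fin r) n ℝ} (h : Q.rank < r) :
    ∃ x ≠ 0, x ᵥ* Q = 0 := by
  obtain ⟨x, hxne, hx⟩ := aux_exists_mulVec_zero (A := Qᵀ) (by rwa [Matrix.rank_transpose])
  exact ⟨x, hxne, by rwa [Matrix.mulVec_transpose] at hx⟩

lemma aux_rank_mul_full_col {r : ℕ} {P : Matrix m (Fin r) ℝ} (h : P.rank = r)
    (Q : Matrix (Fin r) n ℝ) : (P * Q).rank = Q.rank := by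
  have hinj : Function.Injective P.mulVecLin := by
    rw [← LinearMap.ker_eq_bot, LinearMap.ker_eq_bot']
    intro x hx
    exact aux_full_col_rank_mulVec h (by simpa [Matrix.mulVecLin_apply] using hx)
  rw [Matrix.rank, Matrix.rank, Matrix.mulVecLin_mul, LinearMap.range_comp]
  exact (Submodule.equivMapOfInjective _ hinj _).finrank_eq.symm

lemma aux_vecMulVec_mul (u : m → ℝ) (v : n → ℝ) (B : Matrix n p ℝ) :
    Matrix.vecMulVec u v * B = Matrix.vecMulVec u (v ᵥ* B) := by
  ext i j
  simp [Matrix.mul_apply, Matrix.vecMulVec_apply, Matrix.vecMul, dotProduct,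
    Finset.mul_sum, mul_assoc]

lemma aux_mul_vecMulVec (B : Matrix p m ℝ) (u : m → ℝ) (v : n → ℝ) :
    B * Matrix.vecMulVec u v = Matrix.vecMulVec (B *ᵥ u) v := by
  ext i j
  simp [Matrix.mul_apply, Matrix.vecMulVec_apply, Matrix.mulVec, dotProduct,
    Finset.sum_mul, mul_assoc]

lemma aux_vecMulVec_eq_zero {u : m → ℝ} {v : n → ℝ} (h : Matrix.vecMulVec u v = 0)
    (hu : u ≠ 0) : v = 0 := by
  obtain ⟨i, hi⟩ := Function.ne_iff.mp hu
  funext j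
  have h2 := congrFun (congrFun h i) j
  rw [Matrix.vecMulVec_apply] at h2
  simp only [Matrix.zero_apply] at h2
  have := mul_eq_zero.mp h2
  tauto

lemma aux_vecMulVec_eq_zero' {u : m → ℝ} {v : n → ℝ} (h : Matrix.vecMulVec u v = 0)
    (hv : v ≠ 0) : u = 0 := by
  obtain ⟨j, hj⟩ := Function.ne_iff.mp hv
  funext i
  have h2 := congrFun (congrFun h i) j
  rw [Matrix.vecMulVec_apply] at h2
  simp only [Matrix.zero_apply] at h2
  have := mul_eq_zero.mp h2
  tauto

lemma aux_vecMulVec_zero_left (v : n → ℝ) : Matrix.vecMulVec (0 : m → ℝ) v = 0 := by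
  ext i j; simp [Matrix.vecMulVec_apply]

lemma aux_vecMulVec_zero_right (u : m → ℝ) : Matrix.vecMulVec u (0 : n → ℝ) = 0 := by
  ext i j; simp [Matrix.vecMulVec_apply]

lemma aux_vecMulVec_smul (u : m → ℝ) (c : ℝ) (v : n → ℝ) :
    Matrix.vecMulVec u (c • v) = c • Matrix.vecMulVec u v := by
  ext i j
  simp [Matrix.vecMulVec_apply]
  ring

lemma aux_vecMul_vecMulVec (x : m → ℝ) (u : m → ℝ) (v : n → ℝ) :
    x ᵥ* Matrix.vecMulVec u v = (x ⬝ᵥ u) • v := by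
  funext j
  simp only [Matrix.vecMul, dotProduct, Matrix.vecMulVec_apply, Pi.smul_apply,
    smul_eq_mul, Finset.sum_mul]
  exact Finset.sum_congr rfl fun k _ => by ring

lemma aux_one_add_dot_ne {r : ℕ} (x : Fin r → ℝ) : 1 + x ⬝ᵥ x ≠ 0 := by
  have : (0:ℝ) ≤ x ⬝ᵥ x := Finset.sum_nonneg fun i _ => mul_self_nonneg _
  positivity

lemma aux_key_identity₁ {r : ℕ} (x : Fin r → ℝ) :
    (1 + Matrix.vecMulVec x x) * (1 - (1 + x ⬝ᵥ x)⁻¹ • Matrix.vecMulVec x x) = 1 := by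
  set α := (1 + x ⬝ᵥ x)⁻¹ with hα
  set X := Matrix.vecMulVec x x with hX
  have hXX : X * X = (x ⬝ᵥ x) • X := by
    rw [hX, aux_vecMulVec_mul, aux_vecMul_vecMulVec, aux_vecMulVec_smul]
  have hsum : (1:ℝ) - α - α * (x ⬝ᵥ x) = 0 := by
    rw [hα]
    field_simp [aux_one_add_dot_ne x]
    ring
  calc (1 + X) * (1 - α • X)
      = 1 - α • X + (X - α • (X * X)) := by
        rw [add_mul, one_mul, mul_sub, mul_one, Matrix.mul_smul]
    _ = 1 - α • X + (X - (α * (x ⬝ᵥ x)) • X) := by rw [hXX, smul_smul]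
    _ = 1 + ((1:ℝ) - α - α * (x ⬝ᵥ x)) • X := by
        rw [sub_smul, sub_smul, one_smul]
        abel
    _ = 1 := by rw [hsum, zero_smul, add_zero]

lemma aux_key_identity₂ {r : ℕ} (x : Fin r → ℝ) :
    (1 - (1 + x ⬝ᵥ x)⁻¹ • Matrix.vecMulVec x x) * (1 + Matrix.vecMulVec x x) = 1 := by
  set α := (1 + x ⬝ᵥ x)⁻¹ with hα
  set X := Matrix.vecMulVec x x with hX
  have hXX : X * X = (x ⬝ᵥ x) • X := by
    rw [hX, aux_vecMulVec_mul, aux_vecMul_vecMulVec, aux_vecMulVec_smul]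
  have hsum : (1:ℝ) - α - α * (x ⬝ᵥ x) = 0 := by
    rw [hα]
    field_simp [aux_one_add_dot_ne x]
    ring
  calc (1 - α • X) * (1 + X)
      = 1 + X - (α • X + α • (X * X)) := by
        rw [sub_mul, one_mul, mul_add, mul_one, Matrix.smul_mul]
    _ = 1 + X - (α • X + (α * (x ⬝ᵥ x)) • X) := by rw [hXX, smul_smul]
    _ = 1 + ((1:ℝ) - α - α * (x ⬝ᵥ x)) • X := by
        rw [sub_smul, sub_smul, one_smul]
        abel
    _ = 1 := by rw [hsum, zero_smul, add_zero]

lemma aux_rank_factorization (M : Matrix m n ℝ) {r : ℕ} (h : M.rank = r) :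
    ∃ (P : Matrix m (Fin r) ℝ) (Q : Matrix (Fin r) n ℝ),
      M = P * Q ∧ P.rank = r ∧ Q.rank = r := by
  classical
  set V := LinearMap.range M.mulVecLin with hV
  have hfr : finrank ℝ V = r := h
  let b : Basis (Fin r) ℝ V := Module.finBasisOfFinrankEq ℝ V hfr
  have colmem : ∀ j, (fun i => M i j) ∈ V := by
    intro j
    refine ⟨Pi.single j 1, ?_⟩
    ext i
    simp [Matrix.mulVecLin_apply, Matrix.mulVec, dotProduct, Pi.single_apply, mul_ite]
  let P : Matrix m (Fin r) ℝ := Matrix.of fun i k => (b k : m → ℝ) i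
  let Q : Matrix (Fin r) n ℝ := Matrix.of fun k j => b.repr ⟨fun i => M i j, colmem j⟩ k
  have hMPQ : M = P * Q := by
    ext i j
    have hs := b.sum_repr ⟨fun i => M i j, colmem j⟩
    have hs' : (∑ k, b.repr ⟨fun i => M i j, colmem j⟩ k • (b k : m → ℝ))
        = fun i => M i j := by
      have h2 := congrArg (Subtype.val) hs
      rw [AddSubmonoidClass.coe_finset_sum] at h2
      simp only [SetLike.val_smul] at h2
      exact h2
    have h3 := congrFun hs' i
    simp only [Finset.sum_apply, Pi.smul_apply, smul_eq_mul] at h3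
    rw [Matrix.mul_apply, ← h3]
    exact Finset.sum_congr rfl fun k _ => by simp [P, Q, mul_comm]
  have hP : P.rank = r := by
    refine le_antisymm ?_ ?_
    · simpa using P.rank_le_card_width
    · calc r = M.rank := h.symm
        _ ≤ P.rank := by rw [hMPQ]; exact Matrix.rank_mul_le_left _ _
  have hQ : Q.rank = r := by
    refine le_antisymm ?_ ?_
    · simpa using Q.rank_le_card_height
    · calc r = M.rank := h.symm
        _ ≤ Q.rank := by rw [hMPQ]; exact Matrix.rank_mul_le_right _ _
  exact ⟨P, Q, hMPQ, hP, hQ⟩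

end Aux

section Block3Aux

variable {m1 m2 m3 n1 n2 n3 r : ℕ}

lemma aux_block3_mul (P1 : Matrix (Fin m1) (Fin r) ℝ) (P2 : Matrix (Fin m2) (Fin r) ℝ)
    (P3 : Matrix (Fin m3) (Fin r) ℝ) (Q1 : Matrix (Fin r) (Fin n1) ℝ)
    (Q2 : Matrix (Fin r) (Fin n2) ℝ) (Q3 : Matrix (Fin r) (Fin n3) ℝ) :
    (Matrix.fromRows (Matrix.fromRows P1 P2) P3) *
      (Matrix.fromCols (Matrix.fromCols Q1 Q2) Q3) =
      block3 (P1*Q1) (P1*Q2) (P1*Q3) (P2*Q1) (P2*Q2) (P2*Q3) (P3*Q1) (P3*Q2) (P3*Q3) := by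
  ext i j
  rcases i with (i | i) | i <;> rcases j with (j | j) | j <;>
    simp [block3, Matrix.mul_apply, Matrix.fromCols, Matrix.fromBlocks]

lemma aux_block3_inj {F F' : Matrix (Fin m1) (Fin n1) ℝ} {H H' : Matrix (Fin m1) (Fin n2) ℝ}
    {E E' : Matrix (Fin m1) (Fin n3) ℝ} {A A' : Matrix (Fin m2) (Fin n1) ℝ}
    {G G' : Matrix (Fin m2) (Fin n2) ℝ} {B B' : Matrix (Fin m2) (Fin n3) ℝ}
    {C C' : Matrix (Fin m3) (Fin n1) ℝ} {K K' : Matrix (Fin m3) (Fin n2) ℝ}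
    {D D' : Matrix (Fin m3) (Fin n3) ℝ}
    (h : block3 F H E A G B C K D = block3 F' H' E' A' G' B' C' K' D') :
    F = F' ∧ H = H' ∧ E = E' ∧ A = A' ∧ G = G' ∧ B = B' ∧ C = C' ∧ K = K' ∧ D = D' := by
  refine ⟨?_, ?_, ?_, ?_, ?_, ?_, ?_, ?_, ?_⟩ <;> ext i j
  · simpa [block3] using congrFun (congrFun h (Sum.inl (Sum.inl i))) (Sum.inl (Sum.inl j))
  · simpa [block3] using congrFun (congrFun h (Sum.inl (Sum.inl i))) (Sum.inl (Sum.inr j))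
  · simpa [block3] using congrFun (congrFun h (Sum.inl (Sum.inl i))) (Sum.inr j)
  · simpa [block3] using congrFun (congrFun h (Sum.inl (Sum.inr i))) (Sum.inl (Sum.inl j))
  · simpa [block3] using congrFun (congrFun h (Sum.inl (Sum.inr i))) (Sum.inl (Sum.inr j))
  · simpa [block3] using congrFun (congrFun h (Sum.inl (Sum.inr i))) (Sum.inr j)
  · simpa [block3] using congrFun (congrFun h (Sum.inr i)) (Sum.inl (Sum.inl j))
  · simpa [block3] using congrFun (congrFun h (Sum.inr i)) (Sum.inl (Sum.inr j))
  · simpa [block3] using congrFun (congrFun h (Sum.inr i)) (Sum.inr j)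

end Block3Aux

/-- For `M = [[F,H,E],[A,G,B],[C,K,D]]` of rank `r` with the staircase blocks
`F, A, G, K, D` fixed and `H, E, B, C` unknown, the completion is unique iff
`rank A = rank G = rank K = r`. -/
theorem staircase_three_unique_iff {m1 m2 m3 n1 n2 n3 r : ℕ}
    (hm1 : 0 < m1) (hm2 : 0 < m2) (hm3 : 0 < m3)
    (hn1 : 0 < n1) (hn2 : 0 < n2) (hn3 : 0 < n3) (hr : 1 ≤ r)
    (F : Matrix (Fin m1) (Fin n1) ℝ) (H : Matrix (Fin m1) (Fin n2) ℝ)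
    (E : Matrix (Fin m1) (Fin n3) ℝ)
    (A : Matrix (Fin m2) (Fin n1) ℝ) (G : Matrix (Fin m2) (Fin n2) ℝ)
    (B : Matrix (Fin m2) (Fin n3) ℝ)
    (C : Matrix (Fin m3) (Fin n1) ℝ) (K : Matrix (Fin m3) (Fin n2) ℝ)
    (D : Matrix (Fin m3) (Fin n3) ℝ)
    (hM : (block3 F H E A G B C K D).rank = r) :
    (∀ (H' : Matrix (Fin m1) (Fin n2) ℝ) (E' : Matrix (Fin m1) (Fin n3) ℝ)
        (B' : Matrix (Fin m2) (Fin n3) ℝ) (C' : Matrix (Fin m3) (Fin n1) ℝ),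
        (block3 F H' E' A G B' C' K D).rank ≤ r →
          H' = H ∧ E' = E ∧ B' = B ∧ C' = C) ↔
      A.rank = r ∧ G.rank = r ∧ K.rank = r := by
  classical
  constructor
  · -- uniqueness implies full corner ranks
    intro U
    obtain ⟨P, Q, hPQ, hP, hQ⟩ := aux_rank_factorization _ hM
    set P1 := P.submatrix (Sum.inl ∘ Sum.inl) id with hP1
    set P2 := P.submatrix (Sum.inl ∘ Sum.inr) id with hP2
    set P3 := P.submatrix Sum.inr id with hP3
    set Q1 := Q.submatrix id (Sum.inl ∘ Sum.inl) with hQ1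
    set Q2 := Q.submatrix id (Sum.inl ∘ Sum.inr) with hQ2
    set Q3 := Q.submatrix id Sum.inr with hQ3
    have hPdec : P = Matrix.fromRows (Matrix.fromRows P1 P2) P3 := by
      ext i k; rcases i with (i|i)|i <;> rfl
    have hQdec : Q = Matrix.fromCols (Matrix.fromCols Q1 Q2) Q3 := by
      ext k j; rcases j with (j|j)|j <;> rfl
    have hblocks : block3 F H E A G B C K D =
        block3 (P1*Q1) (P1*Q2) (P1*Q3) (P2*Q1) (P2*Q2) (P2*Q3) (P3*Q1) (P3*Q2) (P3*Q3) := by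
      rw [hPQ, hPdec, hQdec, aux_block3_mul]
    obtain ⟨hF, hH, hE, hA, hG, hB, hC, hK, hD⟩ := aux_block3_inj hblocks
    -- Step 1 : Q1 has full rank r
    have hQ1rank : Q1.rank = r := by
      by_contra hne
      have hlt : Q1.rank < r :=
        lt_of_le_of_ne (by simpa using Q1.rank_le_card_height) hne
      obtain ⟨x, hxne, hxQ1⟩ := aux_exists_vecMul_zero hlt
      set u : Fin m1 → ℝ := fun _ => 1 with hu_def
      have hu : u ≠ 0 := by
        intro h0
        have := congrFun h0 ⟨0, hm1⟩
        norm_num [hu_def] at this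
      set P1' := P1 + Matrix.vecMulVec u x with hP1'
      have hF' : F = P1' * Q1 := by
        rw [hP1', Matrix.add_mul, aux_vecMulVec_mul, hxQ1, aux_vecMulVec_zero_right, add_zero, hF]
      have hNeq : block3 F (P1'*Q2) (P1'*Q3) A G B C K D =
          (Matrix.fromRows (Matrix.fromRows P1' P2) P3) *
            (Matrix.fromCols (Matrix.fromCols Q1 Q2) Q3) := by
        rw [aux_block3_mul, hF', hA, hG, hB, hC, hK, hD]
      have hNrank : (block3 F (P1'*Q2) (P1'*Q3) A G B C K D).rank ≤ r := by
        rw [hNeq]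
        refine le_trans (Matrix.rank_mul_le_left _ _) ?_
        simpa using (Matrix.fromRows (Matrix.fromRows P1' P2) P3).rank_le_card_width
      obtain ⟨hH2, hE2, -, -⟩ := U _ _ _ _ hNrank
      have hxQ2 : x ᵥ* Q2 = 0 := by
        rw [hP1', Matrix.add_mul, aux_vecMulVec_mul, ← hH] at hH2
        exact aux_vecMulVec_eq_zero (by simpa using hH2) hu
      have hxQ3 : x ᵥ* Q3 = 0 := by
        rw [hP1', Matrix.add_mul, aux_vecMulVec_mul, ← hE] at hE2
        exact aux_vecMulVec_eq_zero (by simpa using hE2) hu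
      have hxQ : x ᵥ* Q = 0 := by
        rw [hQdec, Matrix.vecMul_fromCols, Matrix.vecMul_fromCols, hxQ1, hxQ2, hxQ3]
        funext j; rcases j with (j|j)|j <;> rfl
      exact hxne (aux_full_row_rank_vecMul hQ hxQ)
    -- Step 2 : P3 has full rank r
    have hP3rank : P3.rank = r := by
      by_contra hne
      have hlt : P3.rank < r :=
        lt_of_le_of_ne (by simpa using P3.rank_le_card_width) hne
      obtain ⟨x, hxne, hxP3⟩ := aux_exists_mulVec_zero hlt
      set w : Fin n3 → ℝ := fun _ => 1 with hw_def
      have hw : w ≠ 0 := by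
        intro h0
        have := congrFun h0 ⟨0, hn3⟩
        norm_num [hw_def] at this
      set Q3' := Q3 + Matrix.vecMulVec x w with hQ3'
      have hD' : D = P3 * Q3' := by
        rw [hQ3', Matrix.mul_add, aux_mul_vecMulVec, hxP3, aux_vecMulVec_zero_left, add_zero, hD]
      have hNeq : block3 F H (P1*Q3') A G (P2*Q3') C K D =
          (Matrix.fromRows (Matrix.fromRows P1 P2) P3) *
            (Matrix.fromCols (Matrix.fromCols Q1 Q2) Q3') := by
        rw [aux_block3_mul, hF, hH, hA, hG, hC, hK, hD']
      have hNrank : (block3 F H (P1*Q3') A G (P2*Q3') C K D).rank ≤ r := by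
        rw [hNeq]
        refine le_trans (Matrix.rank_mul_le_left _ _) ?_
        simpa using (Matrix.fromRows (Matrix.fromRows P1 P2) P3).rank_le_card_width
      obtain ⟨-, hE2, hB2, -⟩ := U _ _ _ _ hNrank
      have hxP1 : P1 *ᵥ x = 0 := by
        rw [hQ3', Matrix.mul_add, aux_mul_vecMulVec, ← hE] at hE2
        have h0 : Matrix.vecMulVec (P1 *ᵥ x) w = 0 := by simpa using hE2
        exact aux_vecMulVec_eq_zero' h0 hw
      have hxP2 : P2 *ᵥ x = 0 := by
        rw [hQ3', Matrix.mul_add, aux_mul_vecMulVec, ← hB] at hB2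
        have h0 : Matrix.vecMulVec (P2 *ᵥ x) w = 0 := by simpa using hB2
        exact aux_vecMulVec_eq_zero' h0 hw
      have hxP : P *ᵥ x = 0 := by
        rw [hPdec, Matrix.fromRows_mulVec, Matrix.fromRows_mulVec, hxP1, hxP2, hxP3]
        funext i; rcases i with (i|i)|i <;> rfl
      exact hxne (aux_full_col_rank_mulVec hP hxP)
    -- Step 3 : P2 has full rank r
    have hP2rank : P2.rank = r := by
      by_contra hne
      have hlt : P2.rank < r :=
        lt_of_le_of_ne (by simpa using P2.rank_le_card_width) hne
      obtain ⟨x, hxne, hxP2⟩ := aux_exists_mulVec_zero hlt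
      set α := (1 + x ⬝ᵥ x)⁻¹ with hα
      set X := Matrix.vecMulVec x x with hX
      set P1' := P1 * (1 - α • X) with hP1'
      set Q1' := (1 + X) * Q1 with hQ1'
      have hF' : F = P1' * Q1' := by
        rw [hP1', hQ1', Matrix.mul_assoc, ← Matrix.mul_assoc (1 - α • X),
          hX, hα, aux_key_identity₂, Matrix.one_mul, hF]
      have hA' : A = P2 * Q1' := by
        rw [hQ1', Matrix.add_mul, Matrix.one_mul, Matrix.mul_add, ← Matrix.mul_assoc,
          hX, aux_mul_vecMulVec, hxP2, aux_vecMulVec_zero_left, Matrix.zero_mul, add_zero, hA]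
      have hC' : P3 * Q1' = C + Matrix.vecMulVec (P3 *ᵥ x) (x ᵥ* Q1) := by
        rw [hQ1', Matrix.add_mul, Matrix.one_mul, Matrix.mul_add, ← Matrix.mul_assoc,
          hX, aux_mul_vecMulVec, aux_vecMulVec_mul, ← hC]
      have hNeq : block3 F (P1'*Q2) (P1'*Q3) A G B (P3*Q1') K D =
          (Matrix.fromRows (Matrix.fromRows P1' P2) P3) *
            (Matrix.fromCols (Matrix.fromCols Q1' Q2) Q3) := by
        rw [aux_block3_mul, hF', hA', hG, hB, hK, hD]
      have hNrank : (block3 F (P1'*Q2) (P1'*Q3) A G B (P3*Q1') K D).rank ≤ r := by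
        rw [hNeq]
        refine le_trans (Matrix.rank_mul_le_left _ _) ?_
        simpa using (Matrix.fromRows (Matrix.fromRows P1' P2) P3).rank_le_card_width
      obtain ⟨-, -, -, hC2⟩ := U _ _ _ _ hNrank
      rw [hC'] at hC2
      have h0 : Matrix.vecMulVec (P3 *ᵥ x) (x ᵥ* Q1) = 0 := by
        have := hC2
        simpa [add_eq_left] using this
      have hP3x : P3 *ᵥ x ≠ 0 := by
        intro hz
        exact hxne (aux_full_col_rank_mulVec hP3rank hz)
      have hxQ1' : x ᵥ* Q1 = 0 := aux_vecMulVec_eq_zero h0 hP3x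
      exact hxne (aux_full_row_rank_vecMul hQ1rank hxQ1')
    -- Step 4 : Q2 has full rank r
    have hQ2rank : Q2.rank = r := by
      by_contra hne
      have hlt : Q2.rank < r :=
        lt_of_le_of_ne (by simpa using Q2.rank_le_card_height) hne
      obtain ⟨x, hxne, hxQ2⟩ := aux_exists_vecMul_zero hlt
      set α := (1 + x ⬝ᵥ x)⁻¹ with hα
      set X := Matrix.vecMulVec x x with hX
      set P3' := P3 * (1 + X) with hP3'
      set Q3' := (1 - α • X) * Q3 with hQ3'
      have hK' : K = P3' * Q2 := by
        rw [hP3', Matrix.mul_assoc, Matrix.add_mul, Matrix.one_mul,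
          hX, aux_vecMulVec_mul, hxQ2, aux_vecMulVec_zero_right, add_zero, hK]
      have hD' : D = P3' * Q3' := by
        rw [hP3', hQ3', Matrix.mul_assoc, ← Matrix.mul_assoc (1 + X),
          hX, hα, aux_key_identity₁, Matrix.one_mul, hD]
      have hC' : P3' * Q1 = C + Matrix.vecMulVec (P3 *ᵥ x) (x ᵥ* Q1) := by
        rw [hP3', Matrix.mul_assoc, Matrix.add_mul, Matrix.one_mul, Matrix.mul_add,
          ← Matrix.mul_assoc, hX, aux_mul_vecMulVec, aux_vecMulVec_mul, ← hC]
      have hNeq : block3 F H (P1*Q3') A G (P2*Q3') (P3'*Q1) K D =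
          (Matrix.fromRows (Matrix.fromRows P1 P2) P3') *
            (Matrix.fromCols (Matrix.fromCols Q1 Q2) Q3') := by
        rw [aux_block3_mul, hF, hH, hA, hG, hK', hD']
      have hNrank : (block3 F H (P1*Q3') A G (P2*Q3') (P3'*Q1) K D).rank ≤ r := by
        rw [hNeq]
        refine le_trans (Matrix.rank_mul_le_left _ _) ?_
        simpa using (Matrix.fromRows (Matrix.fromRows P1 P2) P3').rank_le_card_width
      obtain ⟨-, -, -, hC2⟩ := U _ _ _ _ hNrank
      rw [hC'] at hC2
      have h0 : Matrix.vecMulVec (P3 *ᵥ x) (x ᵥ* Q1) = 0 := by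
        simpa [add_eq_left] using hC2
      have hP3x : P3 *ᵥ x ≠ 0 := by
        intro hz
        exact hxne (aux_full_col_rank_mulVec hP3rank hz)
      have hxQ1' : x ᵥ* Q1 = 0 := aux_vecMulVec_eq_zero h0 hP3x
      exact hxne (aux_full_row_rank_vecMul hQ1rank hxQ1')
    refine ⟨?_, ?_, ?_⟩
    · rw [hA, aux_rank_mul_full_col hP2rank]; exact hQ1rank
    · rw [hG, aux_rank_mul_full_col hP2rank]; exact hQ2rank
    · rw [hK, aux_rank_mul_full_col hP3rank]; exact hQ2rank
  · -- full corner ranks imply uniqueness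
    rintro ⟨hA, hG, hK⟩ H' E' B' C' hN
    set M := block3 F H E A G B C K D with hMdef
    have hMr : M.rank ≤ r := le_of_eq hM
    -- canonical factor matrices obtained from the fixed data (using M)
    have hYFA : ∃ Y : Matrix (Fin m1) (Fin m2) ℝ, F = Y * A := by
      apply aux_exists_row_factor
      have hsub : Matrix.fromRows F A = M.submatrix
          (Sum.elim (Sum.inl ∘ Sum.inl) (Sum.inl ∘ Sum.inr)) (Sum.inl ∘ Sum.inl) := by
        ext i j; rcases i with i|i <;> rfl
      calc (Matrix.fromRows F A).rank ≤ M.rank := by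
            rw [hsub]; exact aux_rank_submatrix_le _ _ _
        _ ≤ A.rank := by rw [hA]; exact hMr
    have hXA : ∃ X : Matrix (Fin n2) (Fin n1) ℝ, A = G * X := by
      apply aux_exists_col_factor
      have hsub : Matrix.fromCols A G = M.submatrix (Sum.inl ∘ Sum.inr) Sum.inl := by
        ext i j; rcases j with j|j <;> rfl
      calc (Matrix.fromCols A G).rank ≤ M.rank := by
            rw [hsub]; exact aux_rank_submatrix_le _ _ _
        _ ≤ G.rank := by rw [hG]; exact hMr
    have hYGK : ∃ Y : Matrix (Fin m2) (Fin m3) ℝ, G = Y * K := by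
      apply aux_exists_row_factor
      have hsub : Matrix.fromRows G K = M.submatrix
          (Sum.elim (Sum.inl ∘ Sum.inr) Sum.inr) (Sum.inl ∘ Sum.inr) := by
        ext i j; rcases i with i|i <;> rfl
      calc (Matrix.fromRows G K).rank ≤ M.rank := by
            rw [hsub]; exact aux_rank_submatrix_le _ _ _
        _ ≤ K.rank := by rw [hK]; exact hMr
    obtain ⟨Y₁, hY₁⟩ := hYFA
    obtain ⟨X₁, hX₁⟩ := hXA
    obtain ⟨Y₂, hY₂⟩ := hYGK
    -- canonical formulas hold for any rank ≤ r completion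
    have key : ∀ (h : Matrix (Fin m1) (Fin n2) ℝ) (e : Matrix (Fin m1) (Fin n3) ℝ)
        (b : Matrix (Fin m2) (Fin n3) ℝ) (c : Matrix (Fin m3) (Fin n1) ℝ),
        (block3 F h e A G b c K D).rank ≤ r →
          h = Y₁ * G ∧ b = Y₂ * D ∧ c = K * X₁ ∧ e = Y₁ * b := by
      intro h e b c hrk
      set N := block3 F h e A G b c K D with hNdef
      have hb1 : Matrix.fromBlocks F h A G = N.submatrix Sum.inl Sum.inl := by
        ext i j; rcases i with i|i <;> rcases j with j|j <;> rfl
      have hb2 : Matrix.fromBlocks A G c K = N.submatrix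
          (Sum.elim (Sum.inl ∘ Sum.inr) Sum.inr) Sum.inl := by
        ext i j; rcases i with i|i <;> rcases j with j|j <;> rfl
      have hb3 : Matrix.fromBlocks G b K D = N.submatrix
          (Sum.elim (Sum.inl ∘ Sum.inr) Sum.inr) (Sum.elim (Sum.inl ∘ Sum.inr) Sum.inr) := by
        ext i j; rcases i with i|i <;> rcases j with j|j <;> rfl
      have hb4 : Matrix.fromBlocks h e G b = N.submatrix
          Sum.inl (Sum.elim (Sum.inl ∘ Sum.inr) Sum.inr) := by
        ext i j; rcases i with i|i <;> rcases j with j|j <;> rfl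
      have hr1 : (Matrix.fromBlocks F h A G).rank ≤ A.rank := by
        rw [hA]
        calc (Matrix.fromBlocks F h A G).rank ≤ N.rank := by
              rw [hb1]; exact aux_rank_submatrix_le _ _ _
          _ ≤ r := hrk
      have hr2 : (Matrix.fromBlocks A G c K).rank ≤ G.rank := by
        rw [hG]
        calc (Matrix.fromBlocks A G c K).rank ≤ N.rank := by
              rw [hb2]; exact aux_rank_submatrix_le _ _ _
          _ ≤ r := hrk
      have hr3 : (Matrix.fromBlocks G b K D).rank ≤ K.rank := by
        rw [hK]
        calc (Matrix.fromBlocks G b K D).rank ≤ N.rank := by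
              rw [hb3]; exact aux_rank_submatrix_le _ _ _
          _ ≤ r := hrk
      have hh : h = Y₁ * G := aux_L1' hr1 Y₁ hY₁.symm
      have hbb : b = Y₂ * D := aux_L1' hr3 Y₂ hY₂.symm
      have hcc : c = K * X₁ := aux_L2' hr2 X₁ hX₁.symm
      have hr4 : (Matrix.fromBlocks h e G b).rank ≤ G.rank := by
        rw [hG]
        calc (Matrix.fromBlocks h e G b).rank ≤ N.rank := by
              rw [hb4]; exact aux_rank_submatrix_le _ _ _
          _ ≤ r := hrk
      have hee : e = Y₁ * b := aux_L1' hr4 Y₁ hh.symm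
      exact ⟨hh, hbb, hcc, hee⟩
    obtain ⟨hh', hb', hc', he'⟩ := key H' E' B' C' hN
    obtain ⟨hh, hb, hc, he⟩ := key H E B C hMr
    refine ⟨?_, ?_, ?_, ?_⟩
    · rw [hh', hh]
    · rw [he', he, hb', hb]
    · rw [hb', hb]
    · rw [hc', hc]
end
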